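/- arXiv:1309.1961 — 4 statements merged into one kernel-verified Lean document; each statement's English description precedes it below -/
import Mathlib

section
/- Let G be a 2-connected 4-hole-free bipartite graph that has a star cutset. Then G has a double star cutset one of whose blocks of decomposition has no star cutset. Specifically, if Gᵢ is a minimal side of a minimally-sided double star cutset of G, then Gᵢ has no star cutset. -/
open SimpleGraph

universe u

variable {V : Type u}

/-- Removing the vertex set `S` from `G` leaves a disconnected (or empty) graph. -/
def RemoveDisconnects (G : SimpleGraph V) (S : Set V) : Prop :=
  ¬ (G.induce (Sᶜ)).Connected

/-- `S` is a star cutset of `G`: `S = {x} ∪ R` with `R ⊆ N(x)`, and removing `S`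
disconnects `G`. -/
def IsStarCutset (G : SimpleGraph V) (S : Set V) : Prop :=
  (∃ x ∈ S, ∀ y ∈ S, y = x ∨ G.Adj x y) ∧ RemoveDisconnects G S

def NoStarCutset (G : SimpleGraph V) : Prop :=
  ∀ S : Set V, ¬ IsStarCutset G S

/-- `G` is bipartite. -/
def Bipartite (G : SimpleGraph V) : Prop := G.Colorable 2

/-- Degree of a vertex, as the cardinality of its neighbor set. -/
noncomputable def deg (G : SimpleGraph V) (v : V) : ℕ := (G.neighborSet v).ncard

/-- A hole: an induced (chordless) cycle of length at least 4. -/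
def IsHole (G : SimpleGraph V) {v : V} (c : G.Walk v v) : Prop :=
  c.IsCycle ∧ 4 ≤ c.length ∧
    ∀ a b : V, a ∈ c.support → b ∈ c.support → G.Adj a b → s(a, b) ∈ c.edges

/-- `G` is balanceable: there is a signing of the edges with `+1, -1` such that
every hole has weight `≡ 0 (mod 4)`. -/
def Balanceable (G : SimpleGraph V) : Prop :=
  ∃ w : Sym2 V → ℤ, (∀ e ∈ G.edgeSet, w e = 1 ∨ w e = -1) ∧
    ∀ (v : V) (c : G.Walk v v), IsHole G c → ((c.edges.map w).sum) % 4 = 0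

/-- `G` is balanced: every hole has length `≡ 0 (mod 4)`. -/
def BalancedGraph (G : SimpleGraph V) : Prop :=
  ∀ (v : V) (c : G.Walk v v), IsHole G c → c.length % 4 = 0

/-- `G` has no hole of length 4. -/
def FourHoleFree (G : SimpleGraph V) : Prop :=
  ∀ (v : V) (c : G.Walk v v), IsHole G c → c.length ≠ 4

def LinearBalanceable (G : SimpleGraph V) : Prop :=
  Balanceable G ∧ FourHoleFree G

/-- `G` is 2-connected: at least 3 vertices and deleting any vertex leaves it connected. -/
def TwoConnected (G : SimpleGraph V) : Prop :=
  3 ≤ Nat.card V ∧ ∀ v : V, (G.induce ({v}ᶜ : Set V)).Connected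

/-- `e` is a chord of the cycle `c`. -/
def IsChord (G : SimpleGraph V) {x : V} (c : G.Walk x x) (e : Sym2 V) : Prop :=
  e ∈ G.edgeSet ∧ e ∉ c.edges ∧ ∀ v ∈ e, v ∈ c.support

/-- `e` is the unique chord of the cycle `c`. -/
def IsUniqueChord (G : SimpleGraph V) {x : V} (c : G.Walk x x) (e : Sym2 V) : Prop :=
  c.IsCycle ∧ IsChord G c e ∧ ∀ f, IsChord G c f → f = e

/-- A pair of twins: distinct vertices with the same neighborhood, of size at least 3. -/
def IsTwinPair (G : SimpleGraph V) (u v : V) : Prop :=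
  u ≠ v ∧ G.neighborSet u = G.neighborSet v ∧ 3 ≤ (G.neighborSet u).ncard

/-- `v` is a cut vertex: two vertices distinct from `v` are connected in `G` but not
in `G - v`. -/
def IsCutVertex (G : SimpleGraph V) (v : V) : Prop :=
  ∃ (x y : V) (hx : x ∈ ({v}ᶜ : Set V)) (hy : y ∈ ({v}ᶜ : Set V)),
    G.Reachable x y ∧ ¬ (G.induce ({v}ᶜ : Set V)).Reachable ⟨x, hx⟩ ⟨y, hy⟩

/-- The graph `R₁₀`: the 10-cycle `x₁x₂…x₁₀x₁` together with the chords `xᵢx_{i+5}`. -/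
def R10 : SimpleGraph (ZMod 10) :=
  SimpleGraph.fromRel (fun i j => j = i + 1 ∨ j = i + 5)

/-- `H` is a chordless path (as a graph): some chordless Hamiltonian path carries all
of its edges. -/
def IsChordlessPathGraph {W : Type*} (H : SimpleGraph W) : Prop :=
  ∃ (u v : W) (p : H.Walk u v), p.IsPath ∧ (∀ w, w ∈ p.support) ∧
    ∀ e ∈ H.edgeSet, e ∈ p.edges

/-- `(X₁, X₂, A₁, A₂, B₁, B₂)` is a split of a 2-join of `G`. -/
structure TwoJoinSplit (G : SimpleGraph V) (X1 X2 A1 A2 B1 B2 : Set V) : Prop where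
  cover : ∀ v, v ∈ X1 ∨ v ∈ X2
  disj : Disjoint X1 X2
  A1sub : A1 ⊆ X1
  B1sub : B1 ⊆ X1
  A2sub : A2 ⊆ X2
  B2sub : B2 ⊆ X2
  A1B1disj : Disjoint A1 B1
  A2B2disj : Disjoint A2 B2
  A1ne : A1.Nonempty
  B1ne : B1.Nonempty
  A2ne : A2.Nonempty
  B2ne : B2.Nonempty
  adjA : ∀ a1 ∈ A1, ∀ a2 ∈ A2, G.Adj a1 a2
  adjB : ∀ b1 ∈ B1, ∀ b2 ∈ B2, G.Adj b1 b2
  noOther : ∀ x1 ∈ X1, ∀ x2 ∈ X2, G.Adj x1 x2 →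
    (x1 ∈ A1 ∧ x2 ∈ A2) ∨ (x1 ∈ B1 ∧ x2 ∈ B2)
  path1 : ∃ a b : X1, (a : V) ∈ A1 ∧ (b : V) ∈ B1 ∧ (G.induce X1).Reachable a b
  path2 : ∃ a b : X2, (a : V) ∈ A2 ∧ (b : V) ∈ B2 ∧ (G.induce X2).Reachable a b
  notPath1 : A1.ncard = 1 → B1.ncard = 1 → ¬ IsChordlessPathGraph (G.induce X1)
  notPath2 : A2.ncard = 1 → B2.ncard = 1 → ¬ IsChordlessPathGraph (G.induce X2)

/-- `(X₁, X₂, A₁, …, A₆)` is a split of a 6-join of `G`. -/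
structure SixJoinSplit (G : SimpleGraph V) (X1 X2 A1 A2 A3 A4 A5 A6 : Set V) : Prop where
  cover : ∀ v, v ∈ X1 ∨ v ∈ X2
  disj : Disjoint X1 X2
  sub1 : A1 ⊆ X1
  sub3 : A3 ⊆ X1
  sub5 : A5 ⊆ X1
  sub2 : A2 ⊆ X2
  sub4 : A4 ⊆ X2
  sub6 : A6 ⊆ X2
  disj13 : Disjoint A1 A3
  disj15 : Disjoint A1 A5
  disj35 : Disjoint A3 A5
  disj24 : Disjoint A2 A4
  disj26 : Disjoint A2 A6
  disj46 : Disjoint A4 A6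
  ne1 : A1.Nonempty
  ne2 : A2.Nonempty
  ne3 : A3.Nonempty
  ne4 : A4.Nonempty
  ne5 : A5.Nonempty
  ne6 : A6.Nonempty
  adj12 : ∀ a ∈ A1, ∀ b ∈ A2, G.Adj a b
  adj23 : ∀ a ∈ A2, ∀ b ∈ A3, G.Adj a b
  adj34 : ∀ a ∈ A3, ∀ b ∈ A4, G.Adj a b
  adj45 : ∀ a ∈ A4, ∀ b ∈ A5, G.Adj a b
  adj56 : ∀ a ∈ A5, ∀ b ∈ A6, G.Adj a b
  adj61 : ∀ a ∈ A6, ∀ b ∈ A1, G.Adj a b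
  noOther : ∀ x ∈ X1, ∀ y ∈ X2, G.Adj x y →
    (x ∈ A1 ∧ y ∈ A2) ∨ (x ∈ A1 ∧ y ∈ A6) ∨ (x ∈ A3 ∧ y ∈ A2) ∨
    (x ∈ A3 ∧ y ∈ A4) ∨ (x ∈ A5 ∧ y ∈ A4) ∨ (x ∈ A5 ∧ y ∈ A6)
  card1 : 4 ≤ X1.ncard
  card2 : 4 ≤ X2.ncard

/-- `S` is a double star cutset of `G`. -/
def IsDoubleStarCutset (G : SimpleGraph V) (S : Set V) : Prop :=
  (∃ u ∈ S, ∃ v ∈ S, G.Adj u v ∧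
    ∀ w ∈ S, w = u ∨ w = v ∨ G.Adj u w ∨ G.Adj v w) ∧
  RemoveDisconnects G S

/-- `W` is (the vertex set of) a block of decomposition of `G` with respect to some
double star cutset. -/
def IsDSCBlock (G : SimpleGraph V) (W : Set V) : Prop :=
  ∃ S C1 C2 : Set V, IsDoubleStarCutset G S ∧
    C1.Nonempty ∧ C2.Nonempty ∧ Disjoint C1 C2 ∧ C1 ∪ C2 = Sᶜ ∧
    (∀ x ∈ C1, ∀ y ∈ C2, ¬ G.Adj x y) ∧ W = S ∪ C1

/-- `W` is a minimal side of a minimally-sided double star cutset of `G`. -/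
def IsMinimalDSCSide (G : SimpleGraph V) (W : Set V) : Prop :=
  IsDSCBlock G W ∧ ∀ W' : Set V, IsDSCBlock G W' → ¬ W' ⊂ W


section Stmt8Aux

lemma stmt8_reach_closed {α : Type*} (H : SimpleGraph α) (X A : Set α)
    (hcl : ∀ y ∈ A, ∀ z ∈ X, H.Adj y z → z ∈ A) :
    ∀ {p q : X}, (H.induce X).Reachable p q → (p : α) ∈ A → (q : α) ∈ A := by
  intro p q hr hp
  obtain ⟨w⟩ := hr
  induction w with
  | nil => exact hp
  | cons h w ih => exact ih (hcl _ hp _ (by exact Subtype.coe_prop _) h)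

lemma stmt8_not_connected_of_sep {α : Type*} (H : SimpleGraph α) (X A B : Set α)
    (hA : A.Nonempty) (hB : B.Nonempty) (hdisj : Disjoint A B) (hun : A ∪ B = X)
    (hsep : ∀ a ∈ A, ∀ b ∈ B, ¬ H.Adj a b) : ¬ (H.induce X).Connected := by
  intro hc
  obtain ⟨a, ha⟩ := hA
  obtain ⟨b, hb⟩ := hB
  have haX : a ∈ X := hun ▸ Or.inl ha
  have hbX : b ∈ X := hun ▸ Or.inr hb
  have hcl : ∀ y ∈ A, ∀ z ∈ X, H.Adj y z → z ∈ A := by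
    intro y hy z hz hadj
    rcases (hun ▸ hz : z ∈ A ∪ B) with h | h
    · exact h
    · exact absurd hadj (hsep y hy z h)
  have := stmt8_reach_closed H X A hcl (hc.preconnected ⟨a, haX⟩ ⟨b, hbX⟩) ha
  exact hdisj.ne_of_mem this hb rfl

lemma stmt8_sep_of_not_connected {α : Type*} (H : SimpleGraph α) (X : Set α)
    (h : ¬ (H.induce X).Connected) :
    X = ∅ ∨ ∃ A B : Set α, A.Nonempty ∧ B.Nonempty ∧ Disjoint A B ∧ A ∪ B = X ∧
      ∀ a ∈ A, ∀ b ∈ B, ¬ H.Adj a b := by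
  by_cases hX : X = ∅
  · exact Or.inl hX
  right
  have hne : Nonempty X := Set.nonempty_coe_sort.2 (Set.nonempty_iff_ne_empty.2 hX)
  have hpc : ¬ (H.induce X).Preconnected := fun hp => h ⟨hp⟩
  rw [SimpleGraph.Preconnected] at hpc
  push_neg at hpc
  obtain ⟨p, q, hpq⟩ := hpc
  classical
  refine ⟨{y | ∃ h : y ∈ X, (H.induce X).Reachable p ⟨y, h⟩},
    X \ {y | ∃ h : y ∈ X, (H.induce X).Reachable p ⟨y, h⟩}, ?_, ?_, ?_, ?_, ?_⟩
  · exact ⟨p, p.2, Reachable.refl _⟩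
  · refine ⟨q, q.2, ?_⟩
    rintro ⟨h, hr⟩
    exact hpq (by simpa using hr)
  · exact Set.disjoint_left.2 fun a ha hb => hb.2 ha
  · exact Set.union_diff_cancel (fun y hy => hy.1)
  · rintro a ⟨ha, hra⟩ b ⟨hbX, hnb⟩ hadj
    exact hnb ⟨hbX, hra.trans (SimpleGraph.Adj.reachable
      (by exact hadj : (H.induce X).Adj ⟨a, ha⟩ ⟨b, hbX⟩))⟩

lemma stmt8_cutv (G : SimpleGraph V) (h2c : TwoConnected G) (x : V) (D : Set V)
    (hxD : x ∉ D) (hD : D.Nonempty)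
    (hcl : ∀ y ∈ D, ∀ z, G.Adj y z → z = x ∨ z ∈ D)
    (z₀ : V) (hz₀x : z₀ ≠ x) (hz₀D : z₀ ∉ D) : False := by
  obtain ⟨y, hy⟩ := hD
  have hyx : y ≠ x := fun h => hxD (h ▸ hy)
  have hcl' : ∀ y ∈ D, ∀ z ∈ ({x}ᶜ : Set V), G.Adj y z → z ∈ D := by
    intro a ha z hz hadj
    rcases hcl a ha z hadj with h | h
    · exact absurd h hz
    · exact h
  have hr := (h2c.2 x).preconnected ⟨y, hyx⟩ ⟨z₀, hz₀x⟩
  exact hz₀D (stmt8_reach_closed G ({x}ᶜ) D hcl' hr hy)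

lemma stmt8_fin2_three {a b c : Fin 2} (h1 : a ≠ b) (h2 : a ≠ c) (h3 : b ≠ c) : False := by
  fin_cases a <;> fin_cases b <;> fin_cases c <;> simp_all

lemma stmt8_fin2_eq {a b c : Fin 2} (h1 : a ≠ c) (h2 : b ≠ c) : a = b := by
  fin_cases a <;> fin_cases b <;> fin_cases c <;> simp_all

lemma stmt8_tri_free (G : SimpleGraph V) (hbip : Bipartite G) :
    ∀ a b c : V, G.Adj a b → G.Adj a c → G.Adj b c → False := by
  obtain ⟨col⟩ := hbip
  intro a b c hab hac hbc
  exact stmt8_fin2_three (col.valid hab) (col.valid hac) (col.valid hbc)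

lemma stmt8_no_c4 (G : SimpleGraph V) (hbip : Bipartite G) (h4hf : FourHoleFree G) :
    ∀ a b c d : V, G.Adj a b → G.Adj b c → G.Adj c d → G.Adj d a → a = c ∨ b = d := by
  intro a b c d hab hbc hcd hda
  by_contra hcon
  push_neg at hcon
  obtain ⟨hac, hbd⟩ := hcon
  obtain ⟨col⟩ := hbip
  have hnac : ¬ G.Adj a c := fun h => (col.valid h) (stmt8_fin2_eq (col.valid hab) (col.valid hbc.symm))
  have hnbd : ¬ G.Adj b d := fun h => (col.valid h) (stmt8_fin2_eq (col.valid hbc) ((col.valid hcd).symm))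
  have hne1 := G.ne_of_adj hab
  have hne2 := G.ne_of_adj hbc
  have hne3 := G.ne_of_adj hcd
  have hne4 := G.ne_of_adj hda
  set w : G.Walk a a := Walk.cons hab (Walk.cons hbc (Walk.cons hcd (Walk.cons hda Walk.nil))) with hw
  have hlen : w.length = 4 := by simp [hw]
  have hcyc : w.IsCycle := by
    rw [SimpleGraph.Walk.isCycle_def]
    refine ⟨?_, by simp [hw], ?_⟩
    · rw [SimpleGraph.Walk.isTrail_def]
      simp [hw]
      tauto
    · simp [hw]
      tauto
  have hhole : IsHole G w := by
    refine ⟨hcyc, by rw [hlen], ?_⟩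
    intro p q hp hq hadj
    simp [hw] at hp hq
    rcases hp with rfl | rfl | rfl | rfl | rfl <;> rcases hq with rfl | rfl | rfl | rfl | rfl <;>
      first
        | exact (hadj.ne rfl).elim
        | exact (hnac hadj).elim
        | exact (hnac hadj.symm).elim
        | exact (hnbd hadj).elim
        | exact (hnbd hadj.symm).elim
        | simp [hw, Sym2.eq_swap]
  exact h4hf a w hhole hlen

lemma stmt8_exists_min_side [Fintype V] (G : SimpleGraph V)
    (h : ∃ W : Set V, IsDSCBlock G W) : ∃ W : Set V, IsMinimalDSCSide G W := by
  classical
  obtain ⟨W0, hW0⟩ := h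
  have hKne : {n | ∃ W : Set V, IsDSCBlock G W ∧ W.ncard = n}.Nonempty := ⟨_, W0, hW0, rfl⟩
  obtain ⟨W, hW, hcard⟩ := Nat.sInf_mem hKne
  refine ⟨W, hW, ?_⟩
  intro W' hW' hss
  have hlt : W'.ncard < W.ncard := Set.ncard_lt_ncard hss (Set.toFinite W)
  have hmem : W'.ncard ∈ {n | ∃ W : Set V, IsDSCBlock G W ∧ W.ncard = n} := ⟨W', hW', rfl⟩
  have := Nat.sInf_le hmem
  omega

lemma stmt8_exists_block [Fintype V] (G : SimpleGraph V) (h2c : TwoConnected G)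
    (htri : ∀ a b c : V, G.Adj a b → G.Adj a c → G.Adj b c → False)
    (hstar : ∃ S : Set V, IsStarCutset G S) : ∃ W : Set V, IsDSCBlock G W := by
  classical
  obtain ⟨S₀, ⟨⟨x, hxS, hdom⟩, hrd⟩⟩ := hstar
  rcases stmt8_sep_of_not_connected G S₀ᶜ hrd with hemp | ⟨A, B, hAne, hBne, hdisj, hun, hsep⟩
  · exfalso
    have hSuniv : S₀ = Set.univ := by
      rw [← compl_compl S₀, hemp, Set.compl_empty]
    have h3 : 3 ≤ Fintype.card V := by
      rw [← Nat.card_eq_fintype_card]; exact h2c.1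
    obtain ⟨y, hyx⟩ := Fintype.exists_ne_of_one_lt_card (by omega) x
    have hcard2 : ({y, x} : Finset V).card < Fintype.card V := by
      have := Finset.card_insert_le y ({x} : Finset V)
      have h1 : ({x} : Finset V).card = 1 := Finset.card_singleton x
      omega
    have hcompl : (({y, x} : Finset V)ᶜ).Nonempty := by
      rw [← Finset.card_pos, Finset.card_compl]
      omega
    obtain ⟨z, hz⟩ := hcompl
    rw [Finset.mem_compl, Finset.mem_insert, Finset.mem_singleton] at hz
    push_neg at hz
    obtain ⟨hzy, hzx⟩ := hz
    have hyc : y ∈ ({x}ᶜ : Set V) := hyx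
    have hzc : z ∈ ({x}ᶜ : Set V) := hzx
    have hr := (h2c.2 x).preconnected ⟨y, hyc⟩ ⟨z, hzc⟩
    obtain ⟨w⟩ := hr
    have hwnil : ¬ w.Nil := by
      intro hn
      have := SimpleGraph.Walk.Nil.eq hn
      exact hzy (congrArg Subtype.val this).symm
    have hadj := SimpleGraph.Walk.adj_snd hwnil
    have hradj : G.Adj y ((w.getVert 1 : ({x}ᶜ : Set V)) : V) := hadj
    have hrx : ((w.getVert 1 : ({x}ᶜ : Set V)) : V) ≠ x := (w.getVert 1).2
    have h1 : G.Adj x y := by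
      rcases hdom y (hSuniv ▸ Set.mem_univ y) with h | h
      · exact absurd h hyx
      · exact h
    have h2 : G.Adj x ((w.getVert 1 : ({x}ᶜ : Set V)) : V) := by
      rcases hdom _ (hSuniv ▸ Set.mem_univ _) with h | h
      · exact absurd h hrx
      · exact h
    exact htri x y _ h1 h2 hradj
  · have hpair : ∃ y ∈ S₀, y ≠ x := by
      by_contra hcon
      push_neg at hcon
      have hS : S₀ = {x} := by
        apply Set.eq_singleton_iff_unique_mem.2 ⟨hxS, fun y hy => hcon y hy⟩
      apply hrd
      rw [hS]
      exact h2c.2 x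
    obtain ⟨y, hyS, hyx⟩ := hpair
    have hxy : G.Adj x y := by
      rcases hdom y hyS with h | h
      · exact absurd h hyx
      · exact h
    refine ⟨S₀ ∪ A, S₀, A, B, ⟨⟨x, hxS, y, hyS, hxy, ?_⟩, hrd⟩, hAne, hBne, hdisj, hun, hsep, rfl⟩
    intro w hw
    rcases hdom w hw with h | h
    · exact Or.inl h
    · exact Or.inr (Or.inr (Or.inl h))

end Stmt8Aux


lemma stmt8_main [Fintype V] (G : SimpleGraph V) (h2c : TwoConnected G)
    (htri : ∀ a b c : V, G.Adj a b → G.Adj a c → G.Adj b c → False)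
    (hP : ∀ a b c d : V, G.Adj a b → G.Adj b c → G.Adj c d → G.Adj d a → a = c ∨ b = d)
    (W : Set V) (hW : IsMinimalDSCSide G W) : NoStarCutset (G.induce W) := by
  classical
  intro T hT
  obtain ⟨hblock, hmin⟩ := hW
  obtain ⟨S, C1, C2, hdsc, hC1ne, hC2ne, hdisj12, hunion, hsepC, hWeq⟩ := hblock
  obtain ⟨⟨u, huS, v, hvS, huv, hdomS⟩, -⟩ := hdsc
  obtain ⟨⟨x', hx'T, hdom'⟩, hrd⟩ := hT
  -- basic set facts
  have hSW : S ⊆ W := hWeq ▸ Set.subset_union_left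
  have hC1W : C1 ⊆ W := hWeq ▸ Set.subset_union_right
  have hC1S : ∀ c ∈ C1, c ∉ S := by
    intro c hc
    have : c ∈ Sᶜ := hunion ▸ Or.inl hc
    exact this
  have hC2W : ∀ c ∈ C2, c ∉ W := by
    intro c hc hcW
    have hcs : c ∈ Sᶜ := hunion ▸ Or.inr hc
    rw [hWeq] at hcW
    rcases hcW with h | h
    · exact hcs h
    · exact hdisj12.ne_of_mem h hc rfl
  have hNC1 : ∀ c ∈ C1, ∀ z, G.Adj c z → z ∈ W := by
    intro c hc z hadj
    by_cases hzS : z ∈ S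
    · exact hSW hzS
    · have : z ∈ C1 ∪ C2 := hunion.symm ▸ (hzS : z ∈ Sᶜ)
      rcases this with h | h
      · exact hC1W h
      · exact absurd hadj (hsepC c hc z h)
  have hmemC1 : ∀ y ∈ W, y ∉ S → y ∈ C1 := by
    intro y hyW hyS
    rw [hWeq] at hyW
    rcases hyW with h | h
    · exact absurd h hyS
    · exact h
  obtain ⟨c₂, hc₂⟩ := hC2ne
  have hc₂W : c₂ ∉ W := hC2W c₂ hc₂
  -- the star cutset at the V level
  set TV : Set V := Subtype.val '' T with hTVdef
  set x : V := (x' : V) with hxdef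
  have hxTV : x ∈ TV := ⟨x', hx'T, rfl⟩
  have hTVW : TV ⊆ W := by
    rintro y ⟨y', -, rfl⟩
    exact y'.2
  have hxW : x ∈ W := hTVW hxTV
  have hdomTV : ∀ y ∈ TV, y = x ∨ G.Adj x y := by
    rintro y ⟨y', hy', rfl⟩
    rcases hdom' y' hy' with h | h
    · exact Or.inl (congrArg Subtype.val h)
    · exact Or.inr h
  have hc₂x : c₂ ≠ x := fun h => hc₂W (h ▸ hxW)
  -- Fact A : every vertex of S other than u, v has a neighbor in C1
  have factA : ∀ s ∈ S, s ≠ u → s ≠ v → ∃ c₁ ∈ C1, G.Adj s c₁ := by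
    intro s hsS hsu hsv
    by_contra hno
    push_neg at hno
    have hcompl : (S \ {s})ᶜ = Sᶜ ∪ {s} := by
      ext z
      by_cases hz : z = s <;> simp [Set.mem_diff, hz]
    have hsep2 : ∀ a ∈ C1, ∀ b ∈ C2 ∪ {s}, ¬ G.Adj a b := by
      intro a ha b hb
      rcases hb with hb | hb
      · exact hsepC a ha b hb
      · rw [hb]
        exact fun hadj => hno a ha hadj.symm
    have hun2 : C1 ∪ (C2 ∪ {s}) = (S \ {s})ᶜ := by
      rw [hcompl, ← Set.union_assoc, hunion]
    have hdisj2 : Disjoint C1 (C2 ∪ {s}) := by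
      rw [Set.disjoint_union_right]
      exact ⟨hdisj12, Set.disjoint_singleton_right.2 (fun h => hC1S s h hsS)⟩
    have hblk : IsDSCBlock G ((S \ {s}) ∪ C1) := by
      refine ⟨S \ {s}, C1, C2 ∪ {s}, ⟨⟨u, ⟨huS, fun h => hsu (by simpa using h.symm)⟩,
        v, ⟨hvS, fun h => hsv (by simpa using h.symm)⟩, huv, ?_⟩, ?_⟩,
        hC1ne, ⟨c₂, Or.inl hc₂⟩, hdisj2, hun2, hsep2, rfl⟩
      · intro w hw
        exact hdomS w hw.1
      · exact stmt8_not_connected_of_sep G _ C1 (C2 ∪ {s}) hC1ne ⟨c₂, Or.inl hc₂⟩ hdisj2 hun2 hsep2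
    apply hmin _ hblk
    constructor
    · intro z hz
      rcases hz with h | h
      · exact hSW h.1
      · exact hC1W h
    · intro hsup
      have hsW : s ∈ W := hSW hsS
      rcases hsup hsW with h | h
      · exact h.2 rfl
      · exact hC1S s h hsS
  -- the BLOCK construction
  have BLOCK : ∀ Tst D : Set V, Tst ⊆ W → D ⊆ W → D.Nonempty → (∀ y ∈ D, y ∉ Tst) →
      (∃ p ∈ Tst, ∃ q ∈ Tst, G.Adj p q ∧ ∀ w ∈ Tst, w = p ∨ w = q ∨ G.Adj p w ∨ G.Adj q w) →
      (∀ y ∈ D, ∀ z, G.Adj y z → z ∈ Tst ∨ z ∈ D) →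
      (∃ w₀ ∈ W, w₀ ∉ Tst ∧ w₀ ∉ D) → False := by
    rintro Tst D hTstW hDW hDne hDT hpair hcl ⟨w₀, hw₀W, hw₀T, hw₀D⟩
    have hc₂T : c₂ ∉ Tst := fun h => hc₂W (hTstW h)
    have hc₂D : c₂ ∉ D := fun h => hc₂W (hDW h)
    have hDsub : D ⊆ Tstᶜ := fun y hy => hDT y hy
    have hBne : (Tstᶜ \ D).Nonempty := ⟨c₂, hc₂T, hc₂D⟩
    have hun2 : D ∪ (Tstᶜ \ D) = Tstᶜ := Set.union_diff_cancel hDsub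
    have hdisj2 : Disjoint D (Tstᶜ \ D) := Set.disjoint_left.2 fun a ha hb => hb.2 ha
    have hsep2 : ∀ a ∈ D, ∀ b ∈ Tstᶜ \ D, ¬ G.Adj a b := by
      intro a ha b hb hadj
      rcases hcl a ha b hadj with h | h
      · exact hb.1 h
      · exact hb.2 h
    have hblk : IsDSCBlock G (Tst ∪ D) :=
      ⟨Tst, D, Tstᶜ \ D, ⟨hpair, stmt8_not_connected_of_sep G _ D (Tstᶜ \ D) hDne hBne hdisj2 hun2 hsep2⟩,
        hDne, hBne, hdisj2, hun2, hsep2, rfl⟩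
    apply hmin _ hblk
    constructor
    · intro z hz
      rcases hz with h | h
      · exact hTstW h
      · exact hDW h
    · intro hsup
      rcases hsup hw₀W with h | h
      · exact hw₀T h
      · exact hw₀D h
  -- analyze the star cutset
  rcases stmt8_sep_of_not_connected (G.induce W) Tᶜ hrd with hemp | ⟨A', B', hA'ne, hB'ne, hdisj', hun', hsep'⟩
  · -- degenerate case : T is all of W
    have hTuniv : T = Set.univ := by
      rw [← compl_compl T, hemp, Set.compl_empty]
    have hTVeq : TV = W := by
      rw [hTVdef, hTuniv]
      exact Subtype.coe_image_univ W
    by_cases hC1x : ∃ c ∈ C1, c ≠ x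
    · obtain ⟨c, hcC1, hcx⟩ := hC1x
      have hcTV : c ∈ TV := hTVeq ▸ hC1W hcC1
      have hxc : G.Adj x c := by
        rcases hdomTV c hcTV with h | h
        · exact absurd h hcx
        · exact h
      have hNc : ∀ z, G.Adj c z → z = x := by
        intro z hadj
        have hzW : z ∈ W := hNC1 c hcC1 z hadj
        rcases hdomTV z (hTVeq ▸ hzW) with h | h
        · exact h
        · exact (htri x c z hxc h hadj).elim
      refine stmt8_cutv G h2c x {c} (fun h => hcx (show x = c from by simpa using h).symm) ⟨c, rfl⟩ ?_ c₂ hc₂x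
        (fun h => hc₂W (by rw [(by simpa using h : c₂ = c)]; exact hC1W hcC1))
      intro y hy z hadj
      rw [(by simpa using hy : y = c)] at hadj
      exact Or.inl (hNc z hadj)
    · push_neg at hC1x
      have hxC1 : x ∈ C1 := by
        obtain ⟨c, hc⟩ := hC1ne
        exact (hC1x c hc) ▸ hc
      have hxu : x ≠ u := fun h => hC1S x hxC1 (h ▸ huS)
      have hxv : x ≠ v := fun h => hC1S x hxC1 (h ▸ hvS)
      have hadju : G.Adj x u := by
        rcases hdomTV u (hTVeq ▸ hSW huS) with h | h
        · exact absurd h.symm hxu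
        · exact h
      have hadjv : G.Adj x v := by
        rcases hdomTV v (hTVeq ▸ hSW hvS) with h | h
        · exact absurd h.symm hxv
        · exact h
      exact htri x u v hadju hadjv huv
  · -- genuine separation of G[W] ∖ T
    set DA : Set V := Subtype.val '' A' with hDAdef
    set DB : Set V := Subtype.val '' B' with hDBdef
    have hDAW : ∀ y ∈ DA, y ∈ W := by rintro y ⟨y', -, rfl⟩; exact y'.2
    have hDBW : ∀ y ∈ DB, y ∈ W := by rintro y ⟨y', -, rfl⟩; exact y'.2
    obtain ⟨a₀', ha₀'⟩ := hA'ne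
    obtain ⟨b₀', hb₀'⟩ := hB'ne
    have hDAne : DA.Nonempty := ⟨a₀', a₀', ha₀', rfl⟩
    have hDBne : DB.Nonempty := ⟨b₀', b₀', hb₀', rfl⟩
    have hsubA : A' ⊆ Tᶜ := hun' ▸ Set.subset_union_left
    have hsubB : B' ⊆ Tᶜ := hun' ▸ Set.subset_union_right
    have hDAT : ∀ y ∈ DA, y ∉ TV := by
      rintro y ⟨y', hy', rfl⟩ ⟨z', hz', hzeq⟩
      exact hsubA hy' (Subtype.ext hzeq ▸ hz' : y' ∈ T)
    have hDBT : ∀ y ∈ DB, y ∉ TV := by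
      rintro y ⟨y', hy', rfl⟩ ⟨z', hz', hzeq⟩
      exact hsubB hy' (Subtype.ext hzeq ▸ hz' : y' ∈ T)
    have hcover : ∀ w ∈ W, w ∉ TV → w ∈ DA ∨ w ∈ DB := by
      intro w hwW hwTV
      have hwT : (⟨w, hwW⟩ : W) ∉ T := fun h => hwTV ⟨⟨w, hwW⟩, h, rfl⟩
      have : (⟨w, hwW⟩ : W) ∈ A' ∪ B' := hun'.symm ▸ (hwT : (⟨w, hwW⟩ : W) ∈ Tᶜ)
      rcases this with h | h
      · exact Or.inl ⟨_, h, rfl⟩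
      · exact Or.inr ⟨_, h, rfl⟩
    have hsepAB : ∀ a ∈ DA, ∀ b ∈ DB, ¬ G.Adj a b := by
      rintro a ⟨a', ha', rfl⟩ b ⟨b', hb', rfl⟩ hadj
      exact hsep' a' ha' b' hb' hadj
    have hsepBA : ∀ a ∈ DB, ∀ b ∈ DA, ¬ G.Adj a b :=
      fun a ha b hb hadj => hsepAB b hb a ha hadj.symm
    have hABdisj : ∀ y ∈ DA, y ∉ DB := by
      rintro y ⟨y', hy', rfl⟩ ⟨z', hz', hzeq⟩
      exact hdisj'.ne_of_mem hy' (Subtype.ext hzeq ▸ hz' : y' ∈ B') rfl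
    have hBAdisj : ∀ y ∈ DB, y ∉ DA := fun y hy hy2 => hABdisj y hy2 hy
    -- the core argument
    have CORE : ∀ (uu vv : V) (D Doth : Set V),
        uu ∈ S → vv ∈ S → G.Adj uu vv →
        (∀ w ∈ S, w = uu ∨ w = vv ∨ G.Adj uu w ∨ G.Adj vv w) →
        (∀ s ∈ S, s ≠ uu → s ≠ vv → ∃ c₁ ∈ C1, G.Adj s c₁) →
        D.Nonempty → (∀ y ∈ D, y ∉ TV) → (∀ y ∈ D, y ∈ W) →
        (∀ w ∈ W, w ∉ TV → w ∈ D ∨ w ∈ Doth) →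
        (∀ a ∈ D, ∀ b ∈ Doth, ¬ G.Adj a b) →
        (x = uu ∨ (x ≠ uu ∧ uu ∈ TV ∧ vv ∉ TV)) →
        vv ∉ D →
        (∃ w₀ ∈ W, w₀ ∉ TV ∧ w₀ ∉ D) → False := by
      intro uu vv D Doth huuS hvvS huuvv hdomS' hfactA hDne hDT hDW hcov hsepD hcase hvvD hw₀
      have huuTV : uu ∈ TV := by
        rcases hcase with h | h
        · exact h ▸ hxTV
        · exact h.2.1
      have hK1 : ∀ s, s ∈ S → s ∈ D → G.Adj uu s ∨ (vv ∈ TV ∧ G.Adj vv s) := by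
        intro s hsS hsD
        have hsuu : s ≠ uu := fun h => hDT s hsD (h ▸ huuTV)
        have hsvv : s ≠ vv := fun h => hvvD (h ▸ hsD)
        rcases hdomS' s hsS with h | h | h | h
        · exact absurd h hsuu
        · exact absurd h hsvv
        · exact Or.inl h
        · by_cases hvT : vv ∈ TV
          · exact Or.inr ⟨hvT, h⟩
          · rcases hcov vv (hSW hvvS) hvT with hv | hv
            · exact absurd hv hvvD
            · exact absurd h.symm (hsepD s hsD vv hv)
      by_cases hdeg : TV ∪ (S ∩ D) ⊆ {x}
      · -- degenerate : cut vertex x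
        have hSD : S ∩ D = ∅ := by
          ext s
          simp only [Set.mem_inter_iff, Set.mem_empty_iff_false, iff_false, not_and]
          intro hsS hsD
          have : s = x := by simpa using hdeg (Or.inr ⟨hsS, hsD⟩)
          exact hDT s hsD (this ▸ hxTV)
        have hxD : x ∉ D := fun h => hDT x h hxTV
        refine stmt8_cutv G h2c x D hxD hDne ?_ c₂ hc₂x (fun h => hc₂W (hDW c₂ h))
        intro y hy z hadj
        have hyC1 : y ∈ C1 := by
          apply hmemC1 y (hDW y hy)
          intro hyS
          have : y ∈ S ∩ D := ⟨hyS, hy⟩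
          rw [hSD] at this
          exact this
        have hzW : z ∈ W := hNC1 y hyC1 z hadj
        by_cases hzTV : z ∈ TV
        · exact Or.inl (by simpa using hdeg (Or.inl hzTV))
        · rcases hcov z hzW hzTV with h | h
          · exact Or.inr h
          · exact absurd hadj (hsepD y hy z h)
      · -- non-degenerate : build the double star cutset TV ∪ (S ∩ D)
        rw [Set.not_subset] at hdeg
        obtain ⟨t, htT, htx⟩ := hdeg
        have htxne : t ≠ x := by simpa using htx
        have hpair : ∃ p ∈ TV ∪ (S ∩ D), ∃ q ∈ TV ∪ (S ∩ D), G.Adj p q ∧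
            ∀ w ∈ TV ∪ (S ∩ D), w = p ∨ w = q ∨ G.Adj p w ∨ G.Adj q w := by
          rcases hcase with hxuu | ⟨hxuu, huuT, hvvT⟩
          · -- x = uu
            subst hxuu
            by_cases hvT : vv ∈ TV
            · refine ⟨x, Or.inl hxTV, vv, Or.inl hvT, huuvv, ?_⟩
              intro w hw
              rcases hw with hw | hw
              · rcases hdomTV w hw with h | h
                · exact Or.inl h
                · exact Or.inr (Or.inr (Or.inl h))
              · rcases hK1 w hw.1 hw.2 with h | h
                · exact Or.inr (Or.inr (Or.inl h))
                · exact Or.inr (Or.inr (Or.inr h.2))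
            · have hadjt : G.Adj x t := by
                rcases htT with h | h
                · rcases hdomTV t h with h2 | h2
                  · exact absurd h2 htxne
                  · exact h2
                · rcases hK1 t h.1 h.2 with h2 | h2
                  · exact h2
                  · exact absurd h2.1 hvT
              refine ⟨x, Or.inl hxTV, t, htT, hadjt, ?_⟩
              intro w hw
              rcases hw with hw | hw
              · rcases hdomTV w hw with h | h
                · exact Or.inl h
                · exact Or.inr (Or.inr (Or.inl h))
              · rcases hK1 w hw.1 hw.2 with h | h
                · exact Or.inr (Or.inr (Or.inl h))
                · exact absurd h.1 hvT
          · -- x ≠ uu, uu ∈ TV, vv ∉ TV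
            have hadjxu : G.Adj x uu := by
              rcases hdomTV uu huuT with h | h
              · exact absurd h.symm hxuu
              · exact h
            refine ⟨x, Or.inl hxTV, uu, Or.inl huuT, hadjxu, ?_⟩
            intro w hw
            rcases hw with hw | hw
            · rcases hdomTV w hw with h | h
              · exact Or.inl h
              · exact Or.inr (Or.inr (Or.inl h))
            · rcases hK1 w hw.1 hw.2 with h | h
              · exact Or.inr (Or.inr (Or.inr h))
              · exact absurd h.1 hvvT
        by_cases hDS : (D \ S).Nonempty
        · -- the block TV ∪ (S ∩ D) ∪ (D \ S)
          refine BLOCK (TV ∪ (S ∩ D)) (D \ S) ?_ ?_ hDS ?_ hpair ?_ ?_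
          · intro z hz
            rcases hz with h | h
            · exact hTVW h
            · exact hSW h.1
          · intro z hz
            exact hDW z hz.1
          · intro y hy hy2
            rcases hy2 with h | h
            · exact hDT y hy.1 h
            · exact hy.2 h.1
          · intro y hy z hadj
            have hyC1 : y ∈ C1 := hmemC1 y (hDW y hy.1) hy.2
            have hzW : z ∈ W := hNC1 y hyC1 z hadj
            by_cases hzTV : z ∈ TV
            · exact Or.inl (Or.inl hzTV)
            · rcases hcov z hzW hzTV with h | h
              · by_cases hzS : z ∈ S
                · exact Or.inl (Or.inr ⟨hzS, h⟩)
                · exact Or.inr ⟨h, hzS⟩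
              · exact absurd hadj (hsepD y hy.1 z h)
          · obtain ⟨w₀, hw₀W, hw₀T, hw₀D⟩ := hw₀
            refine ⟨w₀, hw₀W, ?_, ?_⟩
            · intro h
              rcases h with h | h
              · exact hw₀T h
              · exact hw₀D h.2
            · intro h
              exact hw₀D h.1
        · -- D ⊆ S : use Fact A and the 4-hole / triangle argument
          have hDsubS : ∀ y ∈ D, y ∈ S := by
            intro y hy
            by_contra hyS
            exact hDS ⟨y, hy, hyS⟩
          obtain ⟨s, hsD⟩ := hDne
          have hsS : s ∈ S := hDsubS s hsD
          have hsuu : s ≠ uu := fun h => hDT s hsD (h ▸ huuTV)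
          have hsvv : s ≠ vv := fun h => hvvD (h ▸ hsD)
          obtain ⟨c₁, hc₁C1, hadjsc₁⟩ := hfactA s hsS hsuu hsvv
          have hc₁W : c₁ ∈ W := hC1W hc₁C1
          have hc₁S : c₁ ∉ S := hC1S c₁ hc₁C1
          have hc₁TV : c₁ ∈ TV := by
            by_contra hc₁TV
            rcases hcov c₁ hc₁W hc₁TV with h | h
            · exact hc₁S (hDsubS c₁ h)
            · exact hsepD s hsD c₁ h hadjsc₁
          have hc₁uu : c₁ ≠ uu := fun h => hc₁S (h ▸ huuS)
          have hc₁vv : c₁ ≠ vv := fun h => hc₁S (h ▸ hvvS)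
          rcases hK1 s hsS hsD with hadjus | ⟨hvT, hadjvs⟩
          · -- s is adjacent to uu
            rcases hcase with hxuu | ⟨hxuu, huuT, hvvT⟩
            · -- x = uu : triangle uu, s, c₁
              subst hxuu
              have hadjxc₁ : G.Adj x c₁ := by
                rcases hdomTV c₁ hc₁TV with h | h
                · exact absurd h hc₁uu
                · exact h
              exact htri x s c₁ hadjus hadjxc₁ hadjsc₁
            · -- x ≠ uu
              have hadjxu : G.Adj x uu := by
                rcases hdomTV uu huuT with h | h
                · exact absurd h.symm hxuu
                · exact h
              rcases hdomTV c₁ hc₁TV with hc₁x | hadjxc₁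
              · -- c₁ = x : triangle uu, s, x
                exact htri uu s x hadjus hadjxu.symm (hc₁x ▸ hadjsc₁)
              · -- 4-hole uu, x, c₁, s
                rcases hP uu x c₁ s hadjxu.symm hadjxc₁ hadjsc₁.symm hadjus.symm with h | h
                · exact hc₁uu h.symm
                · exact hDT s hsD (h ▸ hxTV)
          · -- s is adjacent to vv, and vv ∈ TV
            rcases hcase with hxuu | ⟨hxuu, huuT, hvvT⟩
            · subst hxuu
              have hadjxc₁ : G.Adj x c₁ := by
                rcases hdomTV c₁ hc₁TV with h | h
                · exact absurd h hc₁uu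
                · exact h
              rcases hP vv x c₁ s huuvv.symm hadjxc₁ hadjsc₁.symm hadjvs.symm with h | h
              · exact hc₁vv h.symm
              · exact hDT s hsD (h ▸ hxTV)
            · exact hvvT hvT
    -- apply CORE according to the position of u and v
    by_cases huTV : u ∈ TV <;> by_cases hvTV : v ∈ TV
    · -- u, v ∈ TV
      by_cases hxu : x = u
      · exact CORE u v DA DB huS hvS huv hdomS factA hDAne hDAT hDAW hcover hsepAB
          (Or.inl hxu) (fun h => hDAT v h hvTV)
          ⟨b₀', hDBW _ ⟨b₀', hb₀', rfl⟩, hDBT _ ⟨b₀', hb₀', rfl⟩, hBAdisj _ ⟨b₀', hb₀', rfl⟩⟩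
      · by_cases hxv : x = v
        · exact CORE v u DA DB hvS huS huv.symm
            (fun w hw => by rcases hdomS w hw with h | h | h | h <;> tauto)
            (fun s hs h1 h2 => factA s hs h2 h1) hDAne hDAT hDAW hcover hsepAB
            (Or.inl hxv) (fun h => hDAT u h huTV)
            ⟨b₀', hDBW _ ⟨b₀', hb₀', rfl⟩, hDBT _ ⟨b₀', hb₀', rfl⟩, hBAdisj _ ⟨b₀', hb₀', rfl⟩⟩
        · have hadjxu : G.Adj x u := by
            rcases hdomTV u huTV with h | h
            · exact absurd h.symm hxu
            · exact h
          have hadjxv : G.Adj x v := by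
            rcases hdomTV v hvTV with h | h
            · exact absurd h.symm hxv
            · exact h
          exact htri x u v hadjxu hadjxv huv
    · -- u ∈ TV, v ∉ TV
      have hvW : v ∈ W := hSW hvS
      have hcase : x = u ∨ (x ≠ u ∧ u ∈ TV ∧ v ∉ TV) := by
        by_cases hxu : x = u
        · exact Or.inl hxu
        · exact Or.inr ⟨hxu, huTV, hvTV⟩
      rcases hcover v hvW hvTV with hvDA | hvDB
      · exact CORE u v DB DA huS hvS huv hdomS factA hDBne hDBT hDBW
          (fun w hw h => (hcover w hw h).symm) hsepBA hcase
          (fun h => hABdisj v hvDA h)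
          ⟨v, hvW, hvTV, fun h => hABdisj v hvDA h⟩
      · exact CORE u v DA DB huS hvS huv hdomS factA hDAne hDAT hDAW hcover hsepAB hcase
          (fun h => hBAdisj v hvDB h)
          ⟨v, hvW, hvTV, fun h => hBAdisj v hvDB h⟩
    · -- v ∈ TV, u ∉ TV
      have huW : u ∈ W := hSW huS
      have hcase : x = v ∨ (x ≠ v ∧ v ∈ TV ∧ u ∉ TV) := by
        by_cases hxv : x = v
        · exact Or.inl hxv
        · exact Or.inr ⟨hxv, hvTV, huTV⟩
      have hdomS2 : ∀ w ∈ S, w = v ∨ w = u ∨ G.Adj v w ∨ G.Adj u w := by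
        intro w hw
        rcases hdomS w hw with h | h | h | h <;> tauto
      have hfactA2 : ∀ s ∈ S, s ≠ v → s ≠ u → ∃ c₁ ∈ C1, G.Adj s c₁ :=
        fun s hs h1 h2 => factA s hs h2 h1
      rcases hcover u huW huTV with huDA | huDB
      · exact CORE v u DB DA hvS huS huv.symm hdomS2 hfactA2 hDBne hDBT hDBW
          (fun w hw h => (hcover w hw h).symm) hsepBA hcase
          (fun h => hABdisj u huDA h)
          ⟨u, huW, huTV, fun h => hABdisj u huDA h⟩
      · exact CORE v u DA DB hvS huS huv.symm hdomS2 hfactA2 hDAne hDAT hDAW hcover hsepAB hcase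
          (fun h => hBAdisj u huDB h)
          ⟨u, huW, huTV, fun h => hBAdisj u huDB h⟩
    · -- u ∉ TV, v ∉ TV
      have huW : u ∈ W := hSW huS
      have hvW : v ∈ W := hSW hvS
      have NOUV : ∀ D Doth : Set V, D.Nonempty → (∀ y ∈ D, y ∉ TV) → (∀ y ∈ D, y ∈ W) →
          (∀ w ∈ W, w ∉ TV → w ∈ D ∨ w ∈ Doth) →
          (∀ a ∈ D, ∀ b ∈ Doth, ¬ G.Adj a b) →
          u ∈ Doth → v ∈ Doth → False := by
        intro D Doth hDne hDT hDW hcov hsepD huD hvD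
        have hSD : ∀ y ∈ D, y ∉ S := by
          intro y hyD hyS
          rcases hdomS y hyS with h | h | h | h
          · exact hsepD y hyD v hvD (by rw [h]; exact huv)
          · exact hsepD y hyD u huD (by rw [h]; exact huv.symm)
          · exact hsepD y hyD u huD h.symm
          · exact hsepD y hyD v hvD h.symm
        have hcl : ∀ y ∈ D, ∀ z, G.Adj y z → z ∈ TV ∨ z ∈ D := by
          intro y hy z hadj
          have hyC1 : y ∈ C1 := hmemC1 y (hDW y hy) (hSD y hy)
          have hzW : z ∈ W := hNC1 y hyC1 z hadj
          by_cases hzTV : z ∈ TV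
          · exact Or.inl hzTV
          · rcases hcov z hzW hzTV with h | h
            · exact Or.inr h
            · exact absurd hadj (hsepD y hy z h)
        by_cases hdeg : TV ⊆ {x}
        · refine stmt8_cutv G h2c x D (fun h => hDT x h hxTV) hDne ?_ c₂ hc₂x
            (fun h => hc₂W (hDW c₂ h))
          intro y hy z hadj
          rcases hcl y hy z hadj with h | h
          · exact Or.inl (by simpa using hdeg h)
          · exact Or.inr h
        · rw [Set.not_subset] at hdeg
          obtain ⟨t, htTV, htx⟩ := hdeg
          have htxne : t ≠ x := by simpa using htx
          have hadjxt : G.Adj x t := by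
            rcases hdomTV t htTV with h | h
            · exact absurd h htxne
            · exact h
          refine BLOCK TV D hTVW hDW hDne hDT ⟨x, hxTV, t, htTV, hadjxt, ?_⟩ hcl
            ⟨u, huW, huTV, fun h => hSD u h huS⟩
          · intro w hw
            rcases hdomTV w hw with h | h
            · exact Or.inl h
            · exact Or.inr (Or.inr (Or.inl h))
      rcases hcover u huW huTV with huDA | huDB
      · have hvDA : v ∈ DA := by
          rcases hcover v hvW hvTV with h | h
          · exact h
          · exact absurd huv (hsepAB u huDA v h)
        exact NOUV DB DA hDBne hDBT hDBW (fun w hw h => (hcover w hw h).symm) hsepBA huDA hvDA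
      · have hvDB : v ∈ DB := by
          rcases hcover v hvW hvTV with h | h
          · exact absurd huv.symm (hsepAB v h u huDB)
          · exact h
        exact NOUV DA DB hDAne hDAT hDAW hcover hsepAB huDB hvDB

/-- a 2-connected 4-hole-free bipartite graph with a star cutset has a
double star cutset one of whose blocks of decomposition has no star cutset; indeed any
minimal side of a minimally-sided double star cutset has no star cutset. -/
theorem stmt8 {V : Type u} [Fintype V] (G : SimpleGraph V)
    (h2c : TwoConnected G) (h4hf : FourHoleFree G) (hbip : Bipartite G)
    (hstar : ∃ S : Set V, IsStarCutset G S) :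
    (∃ W : Set V, IsMinimalDSCSide G W ∧ NoStarCutset (G.induce W)) ∧
    (∀ W : Set V, IsMinimalDSCSide G W → NoStarCutset (G.induce W)) := by
  have htri := stmt8_tri_free G hbip
  have hP := stmt8_no_c4 G hbip h4hf
  obtain ⟨Wm, hWm⟩ := stmt8_exists_min_side G (stmt8_exists_block G h2c htri hstar)
  exact ⟨⟨Wm, hWm, stmt8_main G h2c htri hP Wm hWm⟩,
    fun W hW => stmt8_main G h2c htri hP W hW⟩
end

section
/- Every balanceable bipartite graph contains no odd wheel and no odd 3-path configuration. -/
open SimpleGraph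

universe u

variable {V : Type u}

/-- `p` is a chordless path of `G`. -/
def IsChordlessPath (G : SimpleGraph V) {u v : V} (p : G.Walk u v) : Prop :=
  p.IsPath ∧ ∀ a b : V, a ∈ p.support → b ∈ p.support → G.Adj a b → s(a, b) ∈ p.edges

/-- The union of the vertex sets of `p` and `q` is the vertex set of a hole of `G`. -/
def PairHole (G : SimpleGraph V) {u v : V} (p q : G.Walk u v) : Prop :=
  ∃ (x : V) (c : G.Walk x x), IsHole G c ∧
    ∀ w : V, w ∈ c.support ↔ (w ∈ p.support ∨ w ∈ q.support)

/-- `p₁, p₂, p₃` form a 3-path configuration connecting `u` and `v`. -/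
def IsThreePathConfig (G : SimpleGraph V) {u v : V}
    (p1 p2 p3 : G.Walk u v) : Prop :=
  u ≠ v ∧ ¬ G.Adj u v ∧
  IsChordlessPath G p1 ∧ IsChordlessPath G p2 ∧ IsChordlessPath G p3 ∧
  PairHole G p1 p2 ∧ PairHole G p1 p3 ∧ PairHole G p2 p3

/-- `G` contains an odd wheel. -/
def HasOddWheel (G : SimpleGraph V) : Prop :=
  ∃ (x v : V) (c : G.Walk v v), IsHole G c ∧ x ∉ c.support ∧
    3 ≤ {w : V | w ∈ c.support ∧ G.Adj x w}.ncard ∧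
    Odd {w : V | w ∈ c.support ∧ G.Adj x w}.ncard

namespace StarAux

open SimpleGraph.Walk

variable {V : Type u} {G : SimpleGraph V}

lemma mem_support_of_mem_edge {a b : V} (p : G.Walk a b) {e : Sym2 V} {y : V}
    (he : e ∈ p.edges) (hy : y ∈ e) : y ∈ p.support := by
  obtain ⟨z, rfl⟩ := Sym2.mem_iff_exists.mp hy
  exact p.fst_mem_support_of_mem_edges he

lemma eq_of_edges_at_start {a b : V} {p : G.Walk a b} (hp : p.IsPath) {e f : Sym2 V}
    (he : e ∈ p.edges) (hf : f ∈ p.edges) (hae : a ∈ e) (haf : a ∈ f) : e = f := by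
  cases p with
  | nil => simp at he
  | cons h q =>
    have hnq : a ∉ q.support := by
      have := hp.support_nodup
      simp [support_cons] at this
      exact this.1
    rw [edges_cons, List.mem_cons] at he hf
    rcases he with rfl | he
    · rcases hf with rfl | hf
      · rfl
      · exact absurd (mem_support_of_mem_edge q hf haf) hnq
    · exact absurd (mem_support_of_mem_edge q he hae) hnq

lemma exists_edge_at_end {a b : V} (p : G.Walk a b) (hab : a ≠ b) :
    ∃ e ∈ p.edges, b ∈ e := by
  obtain ⟨z, hz, q', hq'⟩ := exists_eq_cons_of_ne (Ne.symm hab) p.reverse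
  refine ⟨s(b, z), ?_, by simp⟩
  have : s(b, z) ∈ p.reverse.edges := by rw [hq']; simp
  rwa [edges_reverse, List.mem_reverse] at this

lemma eq_of_edges_at_end {a b : V} {p : G.Walk a b} (hp : p.IsPath) {e f : Sym2 V}
    (he : e ∈ p.edges) (hf : f ∈ p.edges) (hbe : b ∈ e) (hbf : b ∈ f) : e = f := by
  apply eq_of_edges_at_start hp.reverse (e := e) (f := f) <;>
    simp [edges_reverse, List.mem_reverse, *]

/-- In a cycle, each support vertex lies on exactly two (distinct) edges. -/
lemma cycle_two_edges {v u : V} {c : G.Walk v v} (hc : c.IsCycle) (hu : u ∈ c.support) :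
    ∃ e₁ e₂, e₁ ∈ c.edges ∧ e₂ ∈ c.edges ∧ e₁ ≠ e₂ ∧ u ∈ e₁ ∧ u ∈ e₂ ∧
      ∀ e ∈ c.edges, u ∈ e → e = e₁ ∨ e = e₂ := by
  classical
  have key : ∀ (d : G.Walk u u), d.IsCycle →
      ∃ e₁ e₂, e₁ ∈ d.edges ∧ e₂ ∈ d.edges ∧ e₁ ≠ e₂ ∧ u ∈ e₁ ∧ u ∈ e₂ ∧
        ∀ e ∈ d.edges, u ∈ e → e = e₁ ∨ e = e₂ := by
    intro d hd
    cases d with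
    | nil => exact absurd rfl hd.ne_nil
    | cons h r =>
      rename_i m
      have hrpath : r.IsPath := by
        apply IsPath.mk'
        have := (isCycle_def _).mp hd
        simpa using this.2.2
      have hmu : m ≠ u := h.ne'
      -- last edge
      obtain ⟨e₂, he₂, hue₂⟩ := exists_edge_at_end r hmu
      have hnodup : (s(u, m) :: r.edges).Nodup := by
        have := hd.isTrail.edges_nodup; simpa using this
      refine ⟨s(u, m), e₂, by simp, by simp [he₂], ?_, by simp, hue₂, ?_⟩
      · intro hcontra
        rw [hcontra] at hnodup
        simp at hnodup
        exact hnodup.1 he₂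
      · intro e he hue
        rw [edges_cons, List.mem_cons] at he
        rcases he with rfl | he
        · exact Or.inl rfl
        · right
          apply eq_of_edges_at_start hrpath.reverse (e := e) (f := e₂) <;>
            simp [edges_reverse, List.mem_reverse, *]
  obtain ⟨e₁, e₂, h1, h2, h12, hu1, hu2, huniq⟩ := key (c.rotate u hu) (hc.rotate hu)
  have hperm : List.Perm (c.rotate u hu).edges c.edges := (c.rotate_edges u hu).perm
  exact ⟨e₁, e₂, hperm.mem_iff.mp h1, hperm.mem_iff.mp h2, h12, hu1, hu2,
    fun e he hue => huniq e (hperm.mem_iff.mpr he) hue⟩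

lemma no_triangle {col : V → Bool} (hcol : ∀ u v : V, G.Adj u v → col u ≠ col v)
    {x a b : V} (hxa : G.Adj x a) (hxb : G.Adj x b) : ¬ G.Adj a b := by
  intro h
  have h1 := hcol _ _ hxa
  have h2 := hcol _ _ hxb
  have h3 := hcol _ _ h
  cases hca : col a <;> cases hcb : col b <;> cases hcx : col x <;> simp_all

lemma adj_of_length_one {a b : V} {p : G.Walk a b} (h : p.length = 1) : G.Adj a b := by
  cases p with
  | nil => simp at h
  | cons hadj q =>
    have : q.length = 0 := by simpa using h
    have := eq_of_length_eq_zero this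
    subst this
    exact hadj

lemma end_mem_support_tail {a b : V} (p : G.Walk a b) (h : 0 < p.length) :
    b ∈ p.support.tail := by
  cases p with
  | nil => simp at h
  | cons hadj q => simpa using q.end_mem_support

lemma path_closed_eq_nil {a : V} {p : G.Walk a a} (hp : p.IsPath) : p = Walk.nil := by
  cases p with
  | nil => rfl
  | cons hadj q =>
    exfalso
    have h1 : a ∉ q.support := by
      have := hp.support_nodup
      rw [support_cons, List.nodup_cons] at this
      exact this.1
    exact h1 q.end_mem_support

lemma path_interior_two_edges : ∀ {a b y : V} (p : G.Walk a b), p.IsPath →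
    y ∈ p.support → y ≠ a → y ≠ b →
    ∃ e₁ e₂, e₁ ∈ p.edges ∧ e₂ ∈ p.edges ∧ e₁ ≠ e₂ ∧ y ∈ e₁ ∧ y ∈ e₂ := by
  intro a b y p
  induction p with
  | nil =>
    intro _ hy hya _
    simp at hy; exact absurd hy hya
  | @cons u m w hadj q ih =>
    intro hp hy hya hyb
    rw [support_cons, List.mem_cons] at hy
    rcases hy with rfl | hy
    · exact absurd rfl hya
    by_cases hym : y = m
    · subst hym
      obtain ⟨z, hz, q', hq'⟩ := exists_eq_cons_of_ne hyb q
      refine ⟨s(u, y), s(y, z), by simp, ?_, ?_, by simp, by simp⟩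
      · rw [hq']; simp
      · intro hcontra
        have huq : u ∉ q.support := by
          have := hp.support_nodup
          rw [support_cons, List.nodup_cons] at this
          exact this.1
        have : u ∈ s(y, z) := by rw [← hcontra]; simp
        rcases Sym2.mem_iff.mp this with rfl | rfl
        · exact huq q.start_mem_support
        · apply huq
          rw [hq']
          simp [support_cons]
    · obtain ⟨e₁, e₂, h1, h2, h12, hy1, hy2⟩ := ih hp.of_cons hy hym hyb
      exact ⟨e₁, e₂, by simp [h1], by simp [h2], h12, hy1, hy2⟩

/-- Find the first vertex adjacent to `x` along the tail of a path ending in a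
neighbor of `x`, together with the induced split of the path. -/
lemma find_first {x : V} : ∀ {s n₀ : V} (p : G.Walk s n₀), G.Adj x n₀ → p.IsPath → s ≠ n₀ →
    ∃ (b : V) (A : G.Walk s b) (r : G.Walk b n₀), p = A.append r ∧ G.Adj x b ∧ s ≠ b ∧
      (∀ y ∈ A.support.tail, G.Adj x y → y = b) := by
  intro s n₀ p
  induction p with
  | nil => intro _ _ h; exact absurd rfl h
  | @cons u m w hadj q ih =>
    intro hxn hp _
    by_cases hm : G.Adj x m
    · refine ⟨m, Walk.cons hadj Walk.nil, q, by simp, hm, hadj.ne, ?_⟩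
      intro y hy _
      simpa using hy
    · have hmn : m ≠ w := fun h => hm (h ▸ hxn)
      obtain ⟨b, A', r, hsplit, hxb, hmb, hcond⟩ := ih hxn hp.of_cons hmn
      refine ⟨b, Walk.cons hadj A', r, by rw [cons_append, ← hsplit], hxb, ?_, ?_⟩
      · intro h
        subst h
        have hus : u ∉ q.support := by
          have := hp.support_nodup
          rw [support_cons, List.nodup_cons] at this
          exact this.1
        apply hus
        rw [hsplit]
        exact (mem_support_append_iff _ _).mpr (Or.inl A'.end_mem_support)
      · intro y hy hxy
        rw [support_cons] at hy
        simp only [List.tail_cons] at hy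
        rw [support_eq_cons A'] at hy
        rcases List.mem_cons.mp hy with rfl | hy
        · exact absurd hxy hm
        · exact hcond y hy hxy

lemma sector_hole {v₀ x a b : V} {d : G.Walk v₀ v₀} (hd : IsHole G d) (hx : x ∉ d.support)
    {col : V → Bool} (hcol : ∀ u v : V, G.Adj u v → col u ≠ col v)
    {A : G.Walk a b} (hA : A.IsPath) (hab : a ≠ b)
    (hAe : ∀ e ∈ A.edges, e ∈ d.edges) (hAs : ∀ y ∈ A.support, y ∈ d.support)
    (hxa : G.Adj x a) (hxb : G.Adj x b)
    (hint : ∀ y ∈ A.support.tail, G.Adj x y → y = b) :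
    IsHole G (Walk.cons hxa.symm (Walk.cons hxb A.reverse)) := by
  set C := Walk.cons hxa.symm (Walk.cons hxb A.reverse) with hC
  have hnadj : ¬ G.Adj a b := no_triangle hcol hxa hxb
  have hxA : x ∉ A.support := fun h => hx (hAs _ h)
  have hlen2 : 2 ≤ A.length := by
    by_contra hlt
    push_neg at hlt
    interval_cases h : A.length
    · exact hab (eq_of_length_eq_zero h)
    · exact hnadj (adj_of_length_one h)
  -- chordlessness within A
  have chordA : ∀ y z : V, y ∈ A.support → z ∈ A.support → G.Adj y z → s(y, z) ∈ A.edges := by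
    intro y z hy hz hadj
    by_contra hno
    have hde : s(y, z) ∈ d.edges := hd.2.2 y z (hAs _ hy) (hAs _ hz) hadj
    have hend : ∀ t : V, t ∈ A.support → t ∈ s(y, z) → t = a ∨ t = b := by
      intro t ht hts
      by_contra hcon
      push_neg at hcon
      obtain ⟨e₁, e₂, h1, h2, h12, ht1, ht2⟩ :=
        path_interior_two_edges A hA ht hcon.1 hcon.2
      obtain ⟨f₁, f₂, _, _, hf12, _, _, huniq⟩ := cycle_two_edges hd.1 (hAs _ ht)
      have u1 := huniq e₁ (hAe _ h1) ht1
      have u2 := huniq e₂ (hAe _ h2) ht2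
      have u3 := huniq s(y, z) hde hts
      have hne1 : s(y, z) ≠ e₁ := fun h => hno (h ▸ h1)
      have hne2 : s(y, z) ≠ e₂ := fun h => hno (h ▸ h2)
      rcases u1 with rfl | rfl <;> rcases u2 with h' | h' <;> rcases u3 with h'' | h'' <;>
        simp_all
    have hy' := hend y hy (by simp)
    have hz' := hend z hz (by simp)
    rcases hy' with rfl | rfl <;> rcases hz' with rfl | rfl
    · exact hadj.ne rfl
    · exact hnadj hadj
    · exact hnadj hadj.symm
    · exact hadj.ne rfl
  have hsupC : C.support = a :: x :: A.reverse.support := by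
    simp [hC, support_cons]
  have hedgC : C.edges = s(a, x) :: s(x, b) :: A.reverse.edges := by
    simp [hC, edges_cons]
  have hmemC : ∀ y : V, y ∈ C.support → y = x ∨ y ∈ A.support := by
    intro y hy
    rw [hsupC] at hy
    rcases List.mem_cons.mp hy with rfl | hy
    · right; exact A.start_mem_support
    rcases List.mem_cons.mp hy with rfl | hy
    · left; rfl
    · right; rwa [support_reverse, List.mem_reverse] at hy
  have main : ∀ y : V, y ∈ A.support → G.Adj x y → s(x, y) ∈ C.edges := by
    intro y hy hxy
    rw [support_eq_cons] at hy
    rcases List.mem_cons.mp hy with rfl | hy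
    · rw [hedgC]
      simp [Sym2.eq_swap]
    · have := hint y hy hxy
      subst this
      rw [hedgC]; simp
  refine ⟨?_, ?_, ?_⟩
  · rw [hC, cons_isCycle_iff, cons_isPath_iff]
    refine ⟨⟨hA.reverse, ?_⟩, ?_⟩
    · rwa [support_reverse, List.mem_reverse]
    · rw [edges_cons, List.mem_cons]
      push_neg
      constructor
      · intro h
        rw [Sym2.eq_iff] at h
        rcases h with ⟨h1, h2⟩ | ⟨h1, h2⟩
        · exact hxa.ne h1.symm
        · exact hab h1
      · intro h
        rw [edges_reverse, List.mem_reverse] at h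
        exact hxA (mem_support_of_mem_edge A h (by simp))
  · have : C.length = A.length + 2 := by
      simp [hC]
    omega
  · intro y z hy hz hadj
    rcases hmemC y hy with rfl | hy' <;> rcases hmemC z hz with rfl | hz'
    · exact absurd rfl hadj.ne
    · exact main z hz' hadj
    · rw [Sym2.eq_swap]
      exact main y hy' hadj.symm
    · have := chordA y z hy' hz' hadj
      rw [hedgC]
      right; right
      rw [edges_reverse]
      exact List.mem_reverse.mpr this

lemma rec_sectors (w : Sym2 V → ℤ) (hw : ∀ e ∈ G.edgeSet, w e = 1 ∨ w e = -1)
    (hbal4 : ∀ (y : V) (c : G.Walk y y), IsHole G c → ((c.edges.map w).sum) % 4 = 0)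
    {col : V → Bool} (hcol : ∀ u v : V, G.Adj u v → col u ≠ col v)
    {n₀ x : V} {d : G.Walk n₀ n₀} (hd : IsHole G d) (hx : x ∉ d.support) (hxn : G.Adj x n₀) :
    ∀ (n : ℕ) {s : V} (p : G.Walk s n₀), p.length ≤ n → p.IsPath → s ≠ n₀ → G.Adj x s →
    (∃ q : G.Walk n₀ s, q.append p = d) →
    ∃ t : ℤ, ((p.edges.map w).sum + w s(x, s) + w s(x, n₀) + 2 * t) % 4 = 0 ∧
      t % 2 = (({y | y ∈ p.support.tail ∧ G.Adj x y}.ncard : ℤ) - 1) % 2 := by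
  intro n
  induction n with
  | zero =>
    intro s p hlen hp hs _ _
    exact absurd (eq_of_length_eq_zero (Nat.le_zero.mp hlen)) hs
  | succ n ih =>
    intro s p hlen hp hs hxs hsuf
    obtain ⟨q, hq⟩ := hsuf
    obtain ⟨b, A, r, hsplit, hxb, hsb, hint⟩ := find_first p hxn hp hs
    subst hsplit
    -- basic facts
    have hnd : ((A.append r).support).Nodup := hp.support_nodup
    have hndsplit : (A.support ++ r.support.tail).Nodup := by
      rwa [← support_append]
    have hA : A.IsPath := IsPath.mk' hndsplit.of_append_left
    have hAlen : 0 < A.length := by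
      rcases Nat.eq_zero_or_pos A.length with h0 | h0
      · exact absurd (eq_of_length_eq_zero h0) hsb
      · exact h0
    have hbA : b ∈ A.support := A.end_mem_support
    have hbtail : b ∉ r.support.tail :=
      fun h => (List.disjoint_of_nodup_append hndsplit) hbA h
    have hr : r.IsPath := by
      apply IsPath.mk'
      rw [support_eq_cons r, List.nodup_cons]
      exact ⟨hbtail, hndsplit.of_append_right⟩
    have hAe : ∀ e ∈ A.edges, e ∈ d.edges := by
      intro e he
      rw [← hq, edges_append, edges_append]
      simp [he]
    have hAs : ∀ y ∈ A.support, y ∈ d.support := by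
      intro y hy
      rw [← hq]
      rw [mem_support_append_iff]
      right
      rw [mem_support_append_iff]
      left; exact hy
    -- the sector hole
    have hH := sector_hole hd hx hcol hA hsb hAe hAs hxs hxb hint
    have h1 : ((A.edges.map w).sum + w s(x, s) + w s(x, b)) % 4 = 0 := by
      have := hbal4 _ _ hH
      rw [edges_cons, edges_cons, edges_reverse, List.map_cons, List.map_cons,
        List.map_reverse, List.sum_cons, List.sum_cons, List.sum_reverse] at this
      rw [Sym2.eq_swap (a := s) (b := x)] at this
      omega
    -- tail decomposition
    have htail : (A.append r).support.tail = A.support.tail ++ r.support.tail :=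
      tail_support_append A r
    have hsetA : ∀ y, y ∈ A.support.tail → G.Adj x y → y = b := hint
    have hSrfin : {y | y ∈ r.support.tail ∧ G.Adj x y}.Finite :=
      Set.Finite.subset (r.support.tail).finite_toSet (fun y hy => hy.1)
    have hset : {y | y ∈ (A.append r).support.tail ∧ G.Adj x y} =
        {b} ∪ {y | y ∈ r.support.tail ∧ G.Adj x y} := by
      ext y
      simp only [Set.mem_setOf_eq, htail, List.mem_append, Set.mem_union,
        Set.mem_singleton_iff]
      constructor
      · rintro ⟨hy | hy, hadj⟩
        · exact Or.inl (hint y hy hadj)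
        · exact Or.inr ⟨hy, hadj⟩
      · rintro (rfl | ⟨hy, hadj⟩)
        · exact ⟨Or.inl (end_mem_support_tail A hAlen), hxb⟩
        · exact ⟨Or.inr hy, hadj⟩
    have hncard : {y | y ∈ (A.append r).support.tail ∧ G.Adj x y}.ncard =
        1 + {y | y ∈ r.support.tail ∧ G.Adj x y}.ncard := by
      rw [hset, Set.ncard_union_eq ?_ (Set.finite_singleton b) hSrfin, Set.ncard_singleton]
      rw [Set.disjoint_singleton_left]
      exact fun h => hbtail h.1
    have hsum : ((A.append r).edges.map w).sum = (A.edges.map w).sum + (r.edges.map w).sum := by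
      rw [edges_append, List.map_append, List.sum_append]
    by_cases hb : b = n₀
    · subst hb
      have hrnil : r = Walk.nil := path_closed_eq_nil hr
      subst hrnil
      refine ⟨0, ?_, ?_⟩
      · rw [hsum]
        simp only [edges_nil, List.map_nil, List.sum_nil]
        omega
      · rw [hncard]
        simp [Set.ncard_empty]
    · have hrlen : r.length ≤ n := by
        have := length_append A r
        omega
      obtain ⟨t', ih1, ih2⟩ := ih r hrlen hr hb hxb
        ⟨q.append A, by rw [← append_assoc, hq]⟩
      have hwb : w s(x, b) = 1 ∨ w s(x, b) = -1 := hw _ (by rwa [SimpleGraph.mem_edgeSet])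
      refine ⟨w s(x, b) + t', ?_, ?_⟩
      · rw [hsum]; omega
      · rw [hncard]
        have hn2 : (0:ℤ) ≤ ({y | y ∈ r.support.tail ∧ G.Adj x y}.ncard : ℤ) := by positivity
        push_cast
        omega

lemma mem_support_iff_mem_tail {a : V} (p : G.Walk a a) (hp : 0 < p.length) {y : V} :
    y ∈ p.support ↔ y ∈ p.support.tail := by
  constructor
  · intro hy
    rw [support_eq_cons, List.mem_cons] at hy
    rcases hy with rfl | hy
    · exact end_mem_support_tail p hp
    · exact hy
  · intro hy
    rw [support_eq_cons, List.mem_cons]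
    exact Or.inr hy

lemma cons_decomp {a : V} (p : G.Walk a a) (hp : p ≠ Walk.nil) :
    ∃ (m : V) (h : G.Adj a m) (r : G.Walk m a), p = Walk.cons h r := by
  cases p with
  | nil => exact absurd rfl hp
  | cons h r => exact ⟨_, h, r, rfl⟩

lemma hole_rotate [DecidableEq V] {v u : V} {c : G.Walk v v} (hc : IsHole G c)
    (hu : u ∈ c.support) :
    IsHole G (c.rotate u hu) ∧ (c.rotate u hu).length = c.length ∧
      (∀ y : V, y ∈ (c.rotate u hu).support ↔ y ∈ c.support) ∧
      List.Perm (c.rotate u hu).edges c.edges := by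
  have hcyc := hc.1.rotate hu
  have hlenpos : 0 < c.length := by have := hc.2.1; omega
  have hlen : (c.rotate u hu).length = c.length := by
    have h1 : (c.takeUntil u hu).length + (c.dropUntil u hu).length = c.length := by
      rw [← length_append, take_spec]
    have h2 : (c.rotate u hu).length =
        (c.dropUntil u hu).length + (c.takeUntil u hu).length := by
      rw [Walk.rotate, length_append]
    omega
  have hrotpos : 0 < (c.rotate u hu).length := by omega
  have hperm := (c.rotate_edges u hu).perm
  have hmem : ∀ y : V, y ∈ (c.rotate u hu).support ↔ y ∈ c.support := by
    intro y
    rw [mem_support_iff_mem_tail _ hrotpos, mem_support_iff_mem_tail _ hlenpos]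
    exact (c.support_rotate u hu).perm.mem_iff
  refine ⟨⟨hcyc, by have := hc.2.1; omega, ?_⟩, hlen, hmem, hperm⟩
  intro a b ha hb hadj
  rw [hperm.mem_iff]
  exact hc.2.2 a b ((hmem a).mp ha) ((hmem b).mp hb) hadj

lemma no_odd_wheel_aux (w : Sym2 V → ℤ) (hw : ∀ e ∈ G.edgeSet, w e = 1 ∨ w e = -1)
    (hbal4 : ∀ (y : V) (c : G.Walk y y), IsHole G c → ((c.edges.map w).sum) % 4 = 0)
    {col : V → Bool} (hcol : ∀ u v : V, G.Adj u v → col u ≠ col v)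
    {x v : V} {c : G.Walk v v} (hc : IsHole G c) (hx : x ∉ c.support)
    (h3 : 3 ≤ {y | y ∈ c.support ∧ G.Adj x y}.ncard)
    (hodd : Odd {y | y ∈ c.support ∧ G.Adj x y}.ncard) : False := by
  classical
  set N := {y | y ∈ c.support ∧ G.Adj x y} with hN
  have hNne : N.Nonempty := by
    apply Set.nonempty_of_ncard_ne_zero
    omega
  obtain ⟨n₀, hn₀s, hxn⟩ := hNne
  obtain ⟨hd, hdlen, hdmem, hdperm⟩ := hole_rotate hc hn₀s
  set d := c.rotate n₀ hn₀s with hddef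
  have hxd : x ∉ d.support := fun h => hx ((hdmem x).mp h)
  have hNd : N = {y | y ∈ d.support ∧ G.Adj x y} := by
    ext y; rw [hN]; simp only [Set.mem_setOf_eq, hdmem]
  -- decompose d
  obtain ⟨m, hadj, r, hdr⟩ := cons_decomp d hd.1.ne_nil
  have hrnodup : r.support.Nodup := by
    have := ((Walk.isCycle_def _).mp hd.1).2.2
    rw [hdr] at this
    simpa using this
  have hrpath : r.IsPath := IsPath.mk' hrnodup
  have hrlen : 3 ≤ r.length := by
    have : d.length = r.length + 1 := by rw [hdr]; simp
    have := hd.2.1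
    omega
  have hmn : m ≠ n₀ := by
    intro h
    subst h
    have := path_closed_eq_nil hrpath
    subst this
    simp at hrlen
  have hnm : ¬ G.Adj x m := fun h => (no_triangle hcol hxn h) hadj
  obtain ⟨b, A', r', hsplit, hxb, hmb, hint'⟩ := find_first r hxn hrpath hmn
  have hndsplit : (A'.support ++ r'.support.tail).Nodup := by
    rw [← support_append, ← hsplit]; exact hrnodup
  have hA'path : A'.IsPath := IsPath.mk' hndsplit.of_append_left
  have hbA' : b ∈ A'.support := A'.end_mem_support
  have hbr' : b ∉ r'.support.tail :=
    fun h => (List.disjoint_of_nodup_append hndsplit) hbA' h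
  have hsupd : d.support = n₀ :: (A'.support ++ r'.support.tail) := by
    rw [hdr, support_cons, hsplit, support_append]
  by_cases hbn : b = n₀
  · subst hbn
    -- all neighbors are b; contradicts 3 ≤ ncard
    have hsub : N ⊆ {b} := by
      intro y hy
      rw [hNd] at hy
      obtain ⟨hys, hyadj⟩ := hy
      rw [hsupd, List.mem_cons, List.mem_append] at hys
      rcases hys with rfl | hys | hys
      · rfl
      · rw [support_eq_cons, List.mem_cons] at hys
        rcases hys with rfl | hys
        · exact absurd hyadj hnm
        · exact hint' y hys hyadj
      · -- r' : G.Walk b b with b = n₀; r path forces r' = nil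
        have hr'path : r'.IsPath := by
          apply IsPath.mk'
          rw [support_eq_cons r', List.nodup_cons]
          exact ⟨hbr', hndsplit.of_append_right⟩
        have := path_closed_eq_nil hr'path
        subst this
        simp at hys
    have := Set.ncard_le_ncard hsub (Set.finite_singleton b)
    rw [Set.ncard_singleton] at this
    omega
  · -- main case
    have hr'pos : 0 < r'.length := by
      rcases Nat.eq_zero_or_pos r'.length with h0 | h0
      · exact absurd (eq_of_length_eq_zero h0) hbn
      · exact h0
    have hn₀r' : n₀ ∈ r'.support.tail := end_mem_support_tail r' hr'pos
    have hr'path : r'.IsPath := by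
      apply IsPath.mk'
      rw [support_eq_cons r', List.nodup_cons]
      exact ⟨hbr', hndsplit.of_append_right⟩
    have hn₀A' : n₀ ∉ A'.support :=
      fun h => (List.disjoint_of_nodup_append hndsplit) h hn₀r'
    set A₁ : G.Walk n₀ b := Walk.cons hadj A' with hA₁
    have hA₁path : A₁.IsPath := by
      rw [hA₁, cons_isPath_iff]
      exact ⟨hA'path, hn₀A'⟩
    have hdA₁ : A₁.append r' = d := by
      rw [hA₁, hdr, hsplit, cons_append]
    have hA₁e : ∀ e ∈ A₁.edges, e ∈ d.edges := by
      intro e he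
      rw [← hdA₁, edges_append, List.mem_append]
      exact Or.inl he
    have hA₁s : ∀ y ∈ A₁.support, y ∈ d.support := by
      intro y hy
      rw [← hdA₁, mem_support_append_iff]
      exact Or.inl hy
    have hint₁ : ∀ y ∈ A₁.support.tail, G.Adj x y → y = b := by
      intro y hy hxy
      rw [hA₁, support_cons, List.tail_cons, support_eq_cons, List.mem_cons] at hy
      rcases hy with rfl | hy
      · exact absurd hxy hnm
      · exact hint' y hy hxy
    have hab₁ : n₀ ≠ b := fun h => hbn h.symm
    have hH₁ := sector_hole hd hxd hcol hA₁path hab₁ hA₁e hA₁s hxn hxb hint₁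
    have h1 : ((A₁.edges.map w).sum + w s(x, n₀) + w s(x, b)) % 4 = 0 := by
      have := hbal4 _ _ hH₁
      rw [edges_cons, edges_cons, edges_reverse, List.map_cons, List.map_cons,
        List.map_reverse, List.sum_cons, List.sum_cons, List.sum_reverse] at this
      rw [Sym2.eq_swap (a := n₀) (b := x)] at this
      omega
    obtain ⟨t', ih1, ih2⟩ := rec_sectors w hw hbal4 hcol hd hxd hxn r'.length r'
      le_rfl hr'path hbn hxb ⟨A₁, hdA₁⟩
    have hWd : (d.edges.map w).sum % 4 = 0 := hbal4 _ _ hd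
    have hsum : (d.edges.map w).sum = (A₁.edges.map w).sum + (r'.edges.map w).sum := by
      rw [← hdA₁, edges_append, List.map_append, List.sum_append]
    have hwn : w s(x, n₀) = 1 ∨ w s(x, n₀) = -1 := hw _ (by rwa [SimpleGraph.mem_edgeSet])
    have hwb : w s(x, b) = 1 ∨ w s(x, b) = -1 := hw _ (by rwa [SimpleGraph.mem_edgeSet])
    -- N = {b} ∪ (r'-tail neighbors)
    have hSr'fin : {y | y ∈ r'.support.tail ∧ G.Adj x y}.Finite :=
      Set.Finite.subset (r'.support.tail).finite_toSet (fun y hy => hy.1)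
    have hNset : N = {b} ∪ {y | y ∈ r'.support.tail ∧ G.Adj x y} := by
      rw [hNd]
      ext y
      simp only [Set.mem_setOf_eq, Set.mem_union, Set.mem_singleton_iff]
      constructor
      · rintro ⟨hys, hyadj⟩
        rw [hsupd, List.mem_cons, List.mem_append] at hys
        rcases hys with rfl | hys | hys
        · exact Or.inr ⟨hn₀r', hyadj⟩
        · rw [support_eq_cons, List.mem_cons] at hys
          rcases hys with rfl | hys
          · exact absurd hyadj hnm
          · exact Or.inl (hint' y hys hyadj)
        · exact Or.inr ⟨hys, hyadj⟩
      · rintro (rfl | ⟨hys, hyadj⟩)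
        · refine ⟨?_, hxb⟩
          rw [hsupd, List.mem_cons, List.mem_append]
          exact Or.inr (Or.inl hbA')
        · refine ⟨?_, hyadj⟩
          rw [hsupd, List.mem_cons, List.mem_append]
          exact Or.inr (Or.inr hys)
    have hkcard : N.ncard = 1 + {y | y ∈ r'.support.tail ∧ G.Adj x y}.ncard := by
      rw [hNset, Set.ncard_union_eq ?_ (Set.finite_singleton b) hSr'fin,
        Set.ncard_singleton]
      rw [Set.disjoint_singleton_left]
      exact fun h => hbr' h.1
    have hoddk : N.ncard % 2 = 1 := Nat.odd_iff.mp hodd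
    rw [hkcard] at hoddk
    rcases hwn with h | h <;> rcases hwb with h' | h' <;> push_cast at ih2 <;> omega

lemma color_parity {col : V → Bool} (hcol : ∀ u v : V, G.Adj u v → col u ≠ col v) :
    ∀ {u v : V} (p : G.Walk u v), col u = col v ↔ Even p.length := by
  intro u v p
  induction p with
  | nil => simp
  | @cons u m w hadj q ih =>
    have h := hcol _ _ hadj
    rw [length_cons, Nat.even_add_one, ← ih]
    cases hu : col u <;> cases hm : col m <;> cases hw : col w <;> simp_all

lemma pm_sum_parity (w : Sym2 V → ℤ) :
    ∀ (l : List (Sym2 V)), (∀ e ∈ l, w e = 1 ∨ w e = -1) →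
      ((l.map w).sum) % 2 = (l.length : ℤ) % 2 := by
  intro l
  induction l with
  | nil => simp
  | cons e l ih =>
    intro h
    have he := h e (by simp)
    have hl := ih (fun f hf => h f (by simp [hf]))
    simp only [List.map_cons, List.sum_cons, List.length_cons]
    push_cast
    omega

lemma forest_bound : ∀ {a b : V} (p : G.Walk a b), p.IsPath →
    ∀ (E : Finset (Sym2 V)), (∀ e ∈ E, e ∈ p.edges) →
    ∀ (S : Finset V), (∀ e ∈ E, ∀ y ∈ e, y ∈ S) → E.Nonempty → E.card < S.card := by
  intro a b p
  induction p with
  | nil =>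
    intro _ E hE _ _ hne
    obtain ⟨e, he⟩ := hne
    simpa using hE e he
  | @cons u m w hadj q ih =>
    intro hp E hE S hS hne
    classical
    have huq : u ∉ q.support := ((cons_isPath_iff _ _).mp hp).2
    by_cases hhead : s(u, m) ∈ E
    · have huS : u ∈ S := hS _ hhead u (by simp)
      have hmS : m ∈ S := hS _ hhead m (by simp)
      set E' := E.erase s(u, m) with hE'
      have hE'sub : ∀ e ∈ E', e ∈ q.edges := by
        intro e he
        have h1 := hE e (Finset.mem_of_mem_erase he)
        rw [edges_cons, List.mem_cons] at h1
        rcases h1 with rfl | h1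
        · exact absurd rfl (Finset.ne_of_mem_erase he)
        · exact h1
      rcases E'.eq_empty_or_nonempty with hE'e | hE'ne
      · have hEcard : E.card = 1 := by
          have hsub : E ⊆ {s(u, m)} := by
            intro e he
            by_contra hcon
            have hmem : e ∈ E' := Finset.mem_erase.mpr ⟨by simpa using hcon, he⟩
            exact Finset.eq_empty_iff_forall_notMem.mp hE'e e hmem
          have h1 := Finset.card_le_card hsub
          have h2 := Finset.card_pos.mpr hne
          simp only [Finset.card_singleton] at h1
          omega
        have hsub2 : ({u, m} : Finset V) ⊆ S := by
          intro z hz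
          rcases Finset.mem_insert.mp hz with rfl | hz
          · exact huS
          · rw [Finset.mem_singleton] at hz; subst hz; exact hmS
        have h2 : ({u, m} : Finset V).card = 2 := by
          rw [Finset.card_insert_of_notMem (by simp [hadj.ne]), Finset.card_singleton]
        have h3 := Finset.card_le_card hsub2
        omega
      · have hS' : ∀ e ∈ E', ∀ y ∈ e, y ∈ S.erase u := by
          intro e he y hy
          refine Finset.mem_erase.mpr ⟨?_, hS e (Finset.mem_of_mem_erase he) y hy⟩
          rintro rfl
          exact huq (mem_support_of_mem_edge q (hE'sub e he) hy)
        have hlt := ih hp.of_cons E' hE'sub (S.erase u) hS' hE'ne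
        have h1 : E'.card = E.card - 1 := Finset.card_erase_of_mem hhead
        have h2 : (S.erase u).card = S.card - 1 := Finset.card_erase_of_mem huS
        have hpos : 0 < E.card := Finset.card_pos.mpr hne
        omega
    · refine ih hp.of_cons E ?_ S hS hne
      intro e he
      have h1 := hE e he
      rw [edges_cons, List.mem_cons] at h1
      rcases h1 with rfl | h1
      · exact absurd he hhead
      · exact h1

lemma pair_sum (w : Sym2 V → ℤ)
    (hw : ∀ e ∈ G.edgeSet, w e = 1 ∨ w e = -1)
    (hbal4 : ∀ (y : V) (c : G.Walk y y), IsHole G c → ((c.edges.map w).sum) % 4 = 0)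
    {u v : V} (hne : u ≠ v) {p q : G.Walk u v}
    (hp : p.IsPath)
    (hpc : ∀ a b : V, a ∈ p.support → b ∈ p.support → G.Adj a b → s(a, b) ∈ p.edges)
    (hq : q.IsPath)
    (hqc : ∀ a b : V, a ∈ q.support → b ∈ q.support → G.Adj a b → s(a, b) ∈ q.edges)
    (hph : ∃ (y : V) (c : G.Walk y y), IsHole G c ∧
      ∀ z : V, z ∈ c.support ↔ (z ∈ p.support ∨ z ∈ q.support)) :
    ((p.edges.map w).sum + (q.edges.map w).sum) % 4 = 0 := by
  classical
  obtain ⟨y, c, hc, hsupp⟩ := hph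
  have hctrail : c.IsTrail := ((isCycle_def _).mp hc.1).1
  have hctailnd : c.support.tail.Nodup := ((isCycle_def _).mp hc.1).2.2
  set A := p.edges.toFinset with hA
  set B := q.edges.toFinset with hB
  set C := c.edges.toFinset with hCdef
  set Sp := p.support.toFinset with hSp
  set Sq := q.support.toFinset with hSq
  have hAC : A ⊆ C := by
    intro e he
    rw [hA, List.mem_toFinset] at he
    rw [hCdef, List.mem_toFinset]
    revert he
    refine Sym2.ind (fun y1 y2 he => ?_) e
    have hadj : G.Adj y1 y2 := p.adj_of_mem_edges he
    exact hc.2.2 y1 y2 ((hsupp y1).mpr (Or.inl (p.fst_mem_support_of_mem_edges he)))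
      ((hsupp y2).mpr (Or.inl (p.snd_mem_support_of_mem_edges he))) hadj
  have hBC : B ⊆ C := by
    intro e he
    rw [hB, List.mem_toFinset] at he
    rw [hCdef, List.mem_toFinset]
    revert he
    refine Sym2.ind (fun y1 y2 he => ?_) e
    have hadj : G.Adj y1 y2 := q.adj_of_mem_edges he
    exact hc.2.2 y1 y2 ((hsupp y1).mpr (Or.inr (q.fst_mem_support_of_mem_edges he)))
      ((hsupp y2).mpr (Or.inr (q.snd_mem_support_of_mem_edges he))) hadj
  have hcA : A.card = p.length := by
    rw [hA, List.toFinset_card_of_nodup hp.isTrail.edges_nodup, length_edges]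
  have hcB : B.card = q.length := by
    rw [hB, List.toFinset_card_of_nodup hq.isTrail.edges_nodup, length_edges]
  have hcC : C.card = c.length := by
    rw [hCdef, List.toFinset_card_of_nodup hctrail.edges_nodup, length_edges]
  have hSpcard : Sp.card = p.length + 1 := by
    rw [hSp, List.toFinset_card_of_nodup hp.support_nodup, length_support]
  have hSqcard : Sq.card = q.length + 1 := by
    rw [hSq, List.toFinset_card_of_nodup hq.support_nodup, length_support]
  have hclen_pos : 0 < c.length := by have := hc.2.1; omega
  have hScup : c.support.toFinset = Sp ∪ Sq := by
    ext z
    rw [List.mem_toFinset, hsupp z, Finset.mem_union, hSp, hSq,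
      List.mem_toFinset, List.mem_toFinset]
  have hsupc_card : (Sp ∪ Sq).card = c.length := by
    rw [← hScup]
    have h1 : c.support.toFinset = c.support.tail.toFinset := by
      conv_lhs => rw [support_eq_cons]
      rw [List.toFinset_cons]
      exact Finset.insert_eq_self.mpr
        (List.mem_toFinset.mpr (end_mem_support_tail c hclen_pos))
    rw [h1, List.toFinset_card_of_nodup hctailnd]
    have h2 := length_support c
    have h3 : c.support.tail.length = c.support.length - 1 := by
      simp [List.length_tail]
    omega
  have hunion := Finset.card_union_add_card_inter Sp Sq
  have hABcard := Finset.card_union_add_card_inter A B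
  have hABsubC : A ∪ B ⊆ C := Finset.union_subset hAC hBC
  have hk2 : 2 ≤ (Sp ∩ Sq).card := by
    have hsub : ({u, v} : Finset V) ⊆ Sp ∩ Sq := by
      intro z hz
      rcases Finset.mem_insert.mp hz with rfl | hz
      · exact Finset.mem_inter.mpr ⟨List.mem_toFinset.mpr p.start_mem_support,
          List.mem_toFinset.mpr q.start_mem_support⟩
      · rw [Finset.mem_singleton] at hz
        subst hz
        exact Finset.mem_inter.mpr ⟨List.mem_toFinset.mpr p.end_mem_support,
          List.mem_toFinset.mpr q.end_mem_support⟩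
    have h2 : ({u, v} : Finset V).card = 2 := by
      rw [Finset.card_insert_of_notMem (by simp [hne]), Finset.card_singleton]
    have := Finset.card_le_card hsub
    omega
  have hedge_at : ∀ (z₀ : V), z₀ ∈ p.support → z₀ ∈ q.support →
      ∀ e ∈ c.edges, z₀ ∈ e → e ∈ p.edges ∨ e ∈ q.edges := by
    intro z₀ hz₀p hz₀q e he hz₀e
    obtain ⟨z, rfl⟩ := Sym2.mem_iff_exists.mp hz₀e
    have hadj : G.Adj z₀ z := c.adj_of_mem_edges he
    have hzc : z ∈ c.support := c.snd_mem_support_of_mem_edges he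
    rcases (hsupp z).mp hzc with hzp | hzq
    · exact Or.inl (hpc z₀ z hz₀p hzp hadj)
    · exact Or.inr (hqc z₀ z hz₀q hzq hadj)
  have hnoshare : ∀ (z₀ : V), z₀ ∈ p.support → z₀ ∈ q.support →
      (∀ e f : Sym2 V, e ∈ p.edges → f ∈ p.edges → z₀ ∈ e → z₀ ∈ f → e = f) →
      (∀ e f : Sym2 V, e ∈ q.edges → f ∈ q.edges → z₀ ∈ e → z₀ ∈ f → e = f) →
      ∀ e : Sym2 V, e ∈ p.edges → e ∈ q.edges → z₀ ∉ e := by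
    intro z₀ hz₀p hz₀q hup huq e hep heq hz₀e
    have hz₀c : z₀ ∈ c.support := (hsupp z₀).mpr (Or.inl hz₀p)
    obtain ⟨e₁, e₂, h1, h2, h12, hz1, hz2, _⟩ := cycle_two_edges hc.1 hz₀c
    have huniq : ∀ f : Sym2 V, f ∈ c.edges → z₀ ∈ f → f = e := by
      intro f hf hzf
      rcases hedge_at z₀ hz₀p hz₀q f hf hzf with hfp | hfq
      · exact hup f e hfp hep hzf hz₀e
      · exact huq f e hfq heq hzf hz₀e
    exact h12 ((huniq e₁ h1 hz1).trans (huniq e₂ h2 hz2).symm)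
  have hnoshare_u : ∀ e : Sym2 V, e ∈ p.edges → e ∈ q.edges → u ∉ e :=
    hnoshare u p.start_mem_support q.start_mem_support
      (fun e f he hf hue huf => eq_of_edges_at_start hp he hf hue huf)
      (fun e f he hf hue huf => eq_of_edges_at_start hq he hf hue huf)
  have hnoshare_v : ∀ e : Sym2 V, e ∈ p.edges → e ∈ q.edges → v ∉ e :=
    hnoshare v p.end_mem_support q.end_mem_support
      (fun e f he hf hue huf => eq_of_edges_at_end hp he hf hue huf)
      (fun e f he hf hue huf => eq_of_edges_at_end hq he hf hue huf)
  set S2 := ((Sp ∩ Sq).erase u).erase v with hS2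
  have hvSpq : v ∈ (Sp ∩ Sq).erase u := by
    refine Finset.mem_erase.mpr ⟨hne.symm, Finset.mem_inter.mpr
      ⟨List.mem_toFinset.mpr p.end_mem_support, List.mem_toFinset.mpr q.end_mem_support⟩⟩
  have huSpq : u ∈ Sp ∩ Sq := Finset.mem_inter.mpr
    ⟨List.mem_toFinset.mpr p.start_mem_support, List.mem_toFinset.mpr q.start_mem_support⟩
  have hS2card : S2.card + 2 = (Sp ∩ Sq).card := by
    rw [hS2, Finset.card_erase_of_mem hvSpq, Finset.card_erase_of_mem huSpq]
    have h1 := Finset.card_pos.mpr ⟨u, huSpq⟩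
    have h2 := Finset.card_pos.mpr ⟨v, hvSpq⟩
    omega
  have hShEnd : ∀ e ∈ A ∩ B, ∀ z ∈ e, z ∈ S2 := by
    intro e he z hz
    have hep : e ∈ p.edges := List.mem_toFinset.mp (Finset.mem_inter.mp he).1
    have heq : e ∈ q.edges := List.mem_toFinset.mp (Finset.mem_inter.mp he).2
    refine Finset.mem_erase.mpr ⟨?_, Finset.mem_erase.mpr ⟨?_, Finset.mem_inter.mpr
      ⟨List.mem_toFinset.mpr (mem_support_of_mem_edge p hep hz),
       List.mem_toFinset.mpr (mem_support_of_mem_edge q heq hz)⟩⟩⟩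
    · rintro rfl; exact hnoshare_v e hep heq hz
    · rintro rfl; exact hnoshare_u e hep heq hz
  have hEempty : A ∩ B = ∅ := by
    by_contra hne'
    have hnonempty := Finset.nonempty_of_ne_empty hne'
    have hflt := forest_bound p hp (A ∩ B)
      (fun e he => List.mem_toFinset.mp (Finset.mem_inter.mp he).1) S2 hShEnd hnonempty
    have h3 := Finset.card_le_card hABsubC
    omega
  have hABC : A ∪ B = C := by
    apply Finset.eq_of_subset_of_card_le hABsubC
    have h3 := Finset.card_le_card hABsubC
    have h4 : (A ∩ B).card = 0 := by rw [hEempty]; simp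
    omega
  have hsum : (c.edges.map w).sum = (p.edges.map w).sum + (q.edges.map w).sum := by
    rw [← List.sum_toFinset w hctrail.edges_nodup, ← hCdef, ← hABC,
      Finset.sum_union (Finset.disjoint_iff_inter_eq_empty.mpr hEempty), hA, hB,
      List.sum_toFinset w hp.isTrail.edges_nodup, List.sum_toFinset w hq.isTrail.edges_nodup]
  have := hbal4 _ _ hc
  omega

end StarAux

/-- a balanceable bipartite graph contains no odd wheel and no odd
3-path configuration. -/
theorem stmt9 {V : Type u} [Fintype V] (G : SimpleGraph V)
    (col : V → Bool) (hcol : ∀ u v : V, G.Adj u v → col u ≠ col v)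
    (hbal : Balanceable G) :
    ¬ HasOddWheel G ∧
    ∀ (u v : V), col u ≠ col v →
      ∀ p1 p2 p3 : G.Walk u v, ¬ IsThreePathConfig G p1 p2 p3 := by
  classical
  obtain ⟨w, hw, hbal4⟩ := hbal
  constructor
  · rintro ⟨x, v, c, hc, hxs, h3, hodd⟩
    exact StarAux.no_odd_wheel_aux w hw hbal4 hcol hc hxs h3 hodd
  · rintro u v hcolne p1 p2 p3 ⟨huv, hnadj, hp1, hp2, hp3, h12, h13, h23⟩
    have hs12 := StarAux.pair_sum w hw hbal4 huv hp1.1 hp1.2 hp2.1 hp2.2 h12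
    have hs13 := StarAux.pair_sum w hw hbal4 huv hp1.1 hp1.2 hp3.1 hp3.2 h13
    have hs23 := StarAux.pair_sum w hw hbal4 huv hp2.1 hp2.2 hp3.1 hp3.2 h23
    have hoddlen : ∀ r : G.Walk u v, ((r.edges.map w).sum) % 2 = 1 := by
      intro r
      have hodd1 : Odd r.length := by
        rw [← Nat.not_even_iff_odd, ← StarAux.color_parity hcol r]
        exact hcolne
      have hpar := StarAux.pm_sum_parity w r.edges
        (fun e he => hw e (r.edges_subset_edgeSet he))
      rw [SimpleGraph.Walk.length_edges] at hpar
      have hl : r.length % 2 = 1 := Nat.odd_iff.mp hodd1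
      omega
    have h1 := hoddlen p1
    have h2 := hoddlen p2
    have h3 := hoddlen p3
    omega
end

section
/- The graph R₁₀, defined as the 10-cycle x₁x₂...x₁₀x₁ together with the five chords xᵢx_{i+5} for 1 ≤ i ≤ 5, is balanceable: assigning weight +1 to the edges of the 10-cycle and -1 to the five chords makes every hole have weight congruent to 0 mod 4. -/
open SimpleGraph

universe u

variable {V : Type u}

open Classical in
/-- The signing of `R₁₀` that assigns `+1` to the edges of the 10-cycle and `-1` to the
five chords. -/
noncomputable def r10sign : Sym2 (ZMod 10) → ℤ :=
  fun e => if ∃ i : ZMod 10, e = s(i, i + 1) then 1 else -1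

section R10Aux

lemma zmod_eq_add {a : ZMod 10} {k : ZMod 10} : (a = a + k) ↔ k = 0 := by
  constructor
  · intro h; have := congrArg (fun x => x - a) h; simpa using this.symm
  · rintro rfl; simp

lemma r10_adj {a b : ZMod 10} : R10.Adj a b ↔ b = a+1 ∨ b = a+5 ∨ b = a+9 := by
  unfold R10
  rw [SimpleGraph.fromRel_adj]
  constructor
  · rintro ⟨hne, (h|h)|(h|h)⟩
    · exact Or.inl h
    · exact Or.inr (Or.inl h)
    · refine Or.inr (Or.inr ?_)
      rw [h, add_assoc, show (1:ZMod 10)+9 = 0 by decide, add_zero]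
    · refine Or.inr (Or.inl ?_)
      rw [h, add_assoc, show (5:ZMod 10)+5 = 0 by decide, add_zero]
  · rintro (h|h|h)
    · exact ⟨fun hab => by simp [hab] at h; exact absurd h (by decide),
        Or.inl (Or.inl h)⟩
    · exact ⟨fun hab => by simp [hab] at h; exact absurd h (by decide),
        Or.inl (Or.inr h)⟩
    · refine ⟨fun hab => by simp [hab] at h; exact absurd h (by decide), ?_⟩
      refine Or.inr (Or.inl ?_)
      rw [h, add_assoc, show (9:ZMod 10)+1 = 0 by decide, add_zero]

lemma sign_unit (i : ZMod 10) : r10sign s(i, i+1) = 1 := by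
  unfold r10sign; rw [if_pos ⟨i, rfl⟩]

lemma sign_chord (i : ZMod 10) : r10sign s(i, i+5) = -1 := by
  unfold r10sign
  rw [if_neg]
  rintro ⟨j, hj⟩
  rw [Sym2.eq_iff] at hj
  rcases hj with ⟨h1, h2⟩ | ⟨h1, h2⟩
  · rw [← h1] at h2; exact absurd (add_left_cancel h2) (by decide)
  · rw [h1, add_assoc] at h2
    exact absurd (zmod_eq_add.mp h2.symm) (by decide)

lemma sign_cases (e : Sym2 (ZMod 10)) : r10sign e = 1 ∨ r10sign e = -1 := by
  unfold r10sign; split <;> simp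

lemma chord_structure {e : Sym2 (ZMod 10)} (he : e ∈ R10.edgeSet)
    (hs : r10sign e = -1) : ∃ w : ZMod 10, e = s(w, w+5) := by
  induction e with
  | h a b =>
    rw [SimpleGraph.mem_edgeSet] at he
    rw [r10_adj] at he
    rcases he with h|h|h
    · exfalso; rw [h, sign_unit a] at hs; norm_num at hs
    · exact ⟨a, by rw [h]⟩
    · exfalso
      have key : s(a, a+9) = s((a+9 : ZMod 10), (a+9)+1) := by
        rw [Sym2.eq_swap]
        congr 1
        rw [add_assoc, show (9:ZMod 10)+1 = 0 by decide, add_zero]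
      rw [h, key, sign_unit] at hs
      norm_num at hs

lemma cycle_two_nbrs {V : Type*} [DecidableEq V] {G : SimpleGraph V} {v u : V}
    {c : G.Walk v v} (hc : c.IsCycle) (hu : u ∈ c.support) :
    ∃ x y : V, x ≠ y ∧ ∀ z, s(u,z) ∈ c.edges ↔ z = x ∨ z = y := by
  classical
  have hedges : c.edges.Nodup := hc.isCircuit.isTrail.edges_nodup
  have htail : c.support.tail.Nodup := hc.support_nodup
  have hsupp : c.support = v :: c.support.tail := c.support_eq_cons
  have htne : c.support.tail ≠ [] := by
    have h3 := hc.three_le_length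
    intro h
    have : c.support.length = 1 := by rw [hsupp, h]; rfl
    rw [SimpleGraph.Walk.length_support] at this
    omega
  have hlastv : c.support.tail.getLast htne = v := by
    rw [List.getLast_tail]
    exact c.getLast_support
  -- u ∈ tail
  have hu_tail : u ∈ c.support.tail := by
    rw [hsupp] at hu
    rcases List.mem_cons.mp hu with h | h
    · rw [h]
      have hm := List.getLast_mem htne
      rwa [hlastv] at hm
    · exact h
  -- u ∈ dropLast support
  have hdl : c.support.dropLast = v :: c.support.tail.dropLast := by
    conv_lhs => rw [hsupp]
    exact List.dropLast_cons_of_ne_nil htne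
  have hv_not_dl : v ∉ c.support.tail.dropLast := by
    intro hmem
    have hdec := List.dropLast_append_getLast htne
    rw [hlastv] at hdec
    rw [← hdec] at htail
    rcases List.nodup_append'.mp htail with ⟨-, -, hdisj⟩
    exact hdisj hmem (List.mem_singleton_self v)
  have hu_dl : u ∈ c.support.dropLast := by
    rw [hdl]
    by_cases huv : u = v
    · rw [huv]; exact List.mem_cons_self
    · refine List.mem_cons_of_mem _ ?_
      have hdec := List.dropLast_append_getLast htne
      rw [hlastv] at hdec
      rw [← hdec] at hu_tail
      rcases List.mem_append.mp hu_tail with h | h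
      · exact h
      · exact absurd (List.mem_singleton.mp h) huv
  -- nodup of fst/snd maps
  have hfst_nodup : (c.darts.map (·.fst)).Nodup := by
    rw [SimpleGraph.Walk.map_fst_darts]
    rw [hdl]
    exact List.nodup_cons.mpr ⟨hv_not_dl, htail.sublist (List.dropLast_sublist _)⟩
  have hsnd_nodup : (c.darts.map (·.snd)).Nodup := by
    rw [SimpleGraph.Walk.map_snd_darts]; exact htail
  -- get darts
  obtain ⟨d1, hd1mem, hd1⟩ : ∃ d ∈ c.darts, d.fst = u := by
    rw [← SimpleGraph.Walk.map_fst_darts] at hu_dl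
    obtain ⟨d, hd, hdu⟩ := List.mem_map.mp hu_dl
    exact ⟨d, hd, hdu⟩
  obtain ⟨d2, hd2mem, hd2⟩ : ∃ d ∈ c.darts, d.snd = u := by
    rw [← SimpleGraph.Walk.map_snd_darts] at hu_tail
    obtain ⟨d, hd, hdu⟩ := List.mem_map.mp hu_tail
    exact ⟨d, hd, hdu⟩
  have hedges_eq : c.edges = c.darts.map SimpleGraph.Dart.edge := rfl
  refine ⟨d1.snd, d2.fst, ?_, ?_⟩
  · -- x ≠ y
    intro hxy
    have hne : d1 ≠ d2 := by
      intro h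
      apply d1.fst_ne_snd
      rw [h, hd2, ← hd1, h]
    have : d1.edge = d2.edge := by
      rw [SimpleGraph.dart_edge_eq_iff]
      right
      ext
      · show d1.fst = d2.snd; rw [hd1, hd2]
      · show d1.snd = d2.fst; rw [hxy]
    rw [hedges_eq] at hedges
    exact hne (List.inj_on_of_nodup_map hedges hd1mem hd2mem this)
  · intro z
    constructor
    · intro hz
      rw [hedges_eq] at hz
      obtain ⟨d, hdmem, hde⟩ := List.mem_map.mp hz
      rw [SimpleGraph.dart_edge_eq_mk'_iff'] at hde
      rcases hde with ⟨h1, h2⟩ | ⟨h1, h2⟩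
      · left
        have : d = d1 := by
          apply List.inj_on_of_nodup_map hfst_nodup hdmem hd1mem
          rw [h1, hd1]
        rw [← h2, this]
      · right
        have : d = d2 := by
          apply List.inj_on_of_nodup_map hsnd_nodup hdmem hd2mem
          rw [h2, hd2]
        rw [← h1, this]
    · rintro (rfl | rfl)
      · rw [hedges_eq]
        refine List.mem_map.mpr ⟨d1, hd1mem, ?_⟩
        rw [SimpleGraph.dart_edge_eq_mk'_iff']
        exact Or.inl ⟨hd1, rfl⟩
      · rw [hedges_eq]
        refine List.mem_map.mpr ⟨d2, hd2mem, ?_⟩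
        rw [SimpleGraph.dart_edge_eq_mk'_iff']
        exact Or.inr ⟨rfl, hd2⟩

def L10 : List (ZMod 10) := [0,1,2,3,4,5,6,7,8,9]
def fB (l : List Bool) (i : ZMod 10) : Bool := l.getD i.val false

set_option maxRecDepth 40000 in
lemma keyB : ∀ b0 b1 b2 b3 b4 b5 b6 b7 b8 b9 : Bool,
    (∀ u, fB [b0,b1,b2,b3,b4,b5,b6,b7,b8,b9] u = true →
      (fB [b0,b1,b2,b3,b4,b5,b6,b7,b8,b9] (u+1)).toNat
      + (fB [b0,b1,b2,b3,b4,b5,b6,b7,b8,b9] (u+5)).toNat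
      + (fB [b0,b1,b2,b3,b4,b5,b6,b7,b8,b9] (u+9)).toNat = 2) →
    ((L10.map (fun u => (fB [b0,b1,b2,b3,b4,b5,b6,b7,b8,b9] u
        && !fB [b0,b1,b2,b3,b4,b5,b6,b7,b8,b9] (u+5)).toNat)).sum) % 4 = 0 := by decide

lemma fB_eval (g : ZMod 10 → Bool) (u : ZMod 10) :
    fB [g 0, g 1, g 2, g 3, g 4, g 5, g 6, g 7, g 8, g 9] u = g u := by
  fin_cases u <;> rfl

lemma hole_weight (v : ZMod 10) (c : R10.Walk v v) (hc : IsHole R10 c) :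
    ((c.edges.map r10sign).sum) % 4 = 0 := by
  classical
  obtain ⟨hcyc, -, hind⟩ := hc
  set d : ZMod 10 → Bool := fun z => decide (z ∈ c.support) with hd
  -- distinctness helpers
  have n15 : ∀ u : ZMod 10, u+1 ≠ u+5 := fun u h => absurd (add_left_cancel h) (by decide)
  have n19 : ∀ u : ZMod 10, u+1 ≠ u+9 := fun u h => absurd (add_left_cancel h) (by decide)
  have n59 : ∀ u : ZMod 10, u+5 ≠ u+9 := fun u h => absurd (add_left_cancel h) (by decide)
  -- the exactly-two-neighbors condition in Bool form
  have hcond : ∀ u, d u = true →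
      (d (u+1)).toNat + (d (u+5)).toNat + (d (u+9)).toNat = 2 := by
    intro u hu
    have husup : u ∈ c.support := by simpa [hd] using hu
    obtain ⟨x, y, hxy, hiff⟩ := cycle_two_nbrs hcyc husup
    have hxedge : s(u, x) ∈ c.edges := (hiff x).mpr (Or.inl rfl)
    have hyedge : s(u, y) ∈ c.edges := (hiff y).mpr (Or.inr rfl)
    have hxsup : x ∈ c.support := SimpleGraph.Walk.snd_mem_support_of_mem_edges c hxedge
    have hysup : y ∈ c.support := SimpleGraph.Walk.snd_mem_support_of_mem_edges c hyedge
    have hx3 : x = u+1 ∨ x = u+5 ∨ x = u+9 :=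
      r10_adj.mp (SimpleGraph.Walk.adj_of_mem_edges c hxedge)
    have hy3 : y = u+1 ∨ y = u+5 ∨ y = u+9 :=
      r10_adj.mp (SimpleGraph.Walk.adj_of_mem_edges c hyedge)
    have hmem : ∀ z : ZMod 10, (z = u+1 ∨ z = u+5 ∨ z = u+9) →
        (z ∈ c.support ↔ (z = x ∨ z = y)) := by
      intro z hz
      constructor
      · intro hzs
        exact (hiff z).mp (hind u z husup hzs (r10_adj.mpr hz))
      · rintro (rfl|rfl)
        · exact hxsup
        · exact hysup
    have h1 := hmem (u+1) (Or.inl rfl)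
    have h5 := hmem (u+5) (Or.inr (Or.inl rfl))
    have h9 := hmem (u+9) (Or.inr (Or.inr rfl))
    rcases hx3 with hx|hx|hx <;> rcases hy3 with hy|hy|hy <;>
        first
        | (exact absurd (hx.trans hy.symm) hxy)
        | (subst hx; subst hy;
           simp [hd, h1, h5, h9, n15 u, n19 u, n59 u,
             (n15 u).symm, (n19 u).symm, (n59 u).symm])
  -- apply keyB
  have hq0 := keyB (d 0) (d 1) (d 2) (d 3) (d 4) (d 5) (d 6) (d 7) (d 8) (d 9)
    (by intro u; rw [fB_eval d, fB_eval d, fB_eval d, fB_eval d]; exact hcond u)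
  simp only [fB_eval d] at hq0
  -- convert list sum to Finset card
  have hnodup10 : L10.Nodup := by decide
  have huniv : ∀ z : ZMod 10, z ∈ L10.toFinset := by decide
  have hq1 : (L10.toFinset.filter
      (fun u => u ∈ c.support ∧ u+5 ∉ c.support)).card % 4 = 0 := by
    rw [Finset.card_filter]
    rw [show (fun u : ZMod 10 => if u ∈ c.support ∧ u+5 ∉ c.support then 1 else 0)
        = fun u : ZMod 10 => (d u && !d (u+5)).toNat from ?_]
    · rw [List.sum_toFinset _ hnodup10]
      exact hq0
    · funext u
      by_cases h1 : u ∈ c.support <;> by_cases h2 : u+5 ∈ c.support <;>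
        simp [hd, h1, h2]
  -- Finset setup for edges
  have hedn : c.edges.Nodup := hcyc.isCircuit.isTrail.edges_nodup
  set S : Finset (ZMod 10) := c.support.toFinset with hS
  set E : Finset (Sym2 (ZMod 10)) := c.edges.toFinset with hE
  set K : Finset (Sym2 (ZMod 10)) := E.filter (fun e => r10sign e = -1) with hK
  set P : Finset (ZMod 10) := S.filter (fun u => u+5 ∈ S) with hP
  -- |P| = 2|K|
  have hmaps : ∀ u ∈ P, s(u, u+5) ∈ K := by
    intro u hu
    obtain ⟨huS, hu5S⟩ := Finset.mem_filter.mp hu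
    have he : s(u, u+5) ∈ c.edges :=
      hind u (u+5) (List.mem_toFinset.mp huS) (List.mem_toFinset.mp hu5S)
        (r10_adj.mpr (Or.inr (Or.inl rfl)))
    exact Finset.mem_filter.mpr ⟨List.mem_toFinset.mpr he, sign_chord u⟩
  have hPK : P.card = ∑ e ∈ K, (P.filter (fun u => s(u, u+5) = e)).card :=
    Finset.card_eq_sum_card_fiberwise hmaps
  have hfib : ∀ e ∈ K, (P.filter (fun u => s(u, u+5) = e)).card = 2 := by
    intro e heK
    obtain ⟨heE, hesign⟩ := Finset.mem_filter.mp heK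
    have heedges : e ∈ c.edges := List.mem_toFinset.mp heE
    obtain ⟨w, rfl⟩ := chord_structure (SimpleGraph.Walk.edges_subset_edgeSet c heedges) hesign
    have hw : w ∈ c.support := SimpleGraph.Walk.fst_mem_support_of_mem_edges c heedges
    have hw5 : w+5 ∈ c.support := SimpleGraph.Walk.snd_mem_support_of_mem_edges c heedges
    have hw10 : w + 5 + 5 = w := by
      rw [add_assoc, show (5:ZMod 10)+5 = 0 by decide, add_zero]
    have hfil : P.filter (fun u => s(u, u+5) = s(w, w+5)) = {w, w+5} := by
      ext z
      simp only [Finset.mem_filter, Finset.mem_insert, Finset.mem_singleton]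
      constructor
      · rintro ⟨-, hz⟩
        rw [Sym2.eq_iff] at hz
        rcases hz with ⟨h,-⟩|⟨h,-⟩
        · exact Or.inl h
        · exact Or.inr h
      · rintro (rfl|rfl)
        · exact ⟨Finset.mem_filter.mpr ⟨List.mem_toFinset.mpr hw, List.mem_toFinset.mpr hw5⟩,
            rfl⟩
        · refine ⟨Finset.mem_filter.mpr ⟨List.mem_toFinset.mpr hw5, ?_⟩, ?_⟩
          · rw [hw10]; exact List.mem_toFinset.mpr hw
          · rw [hw10]; exact Sym2.eq_swap
    rw [hfil, Finset.card_insert_of_notMem, Finset.card_singleton]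
    simp only [Finset.mem_singleton]
    intro h
    exact absurd (zmod_eq_add.mp h) (by decide)
  have hP2K : P.card = 2 * K.card := by
    rw [hPK, Finset.sum_congr rfl hfib, Finset.sum_const, smul_eq_mul, mul_comm]
  -- |S| = length
  have htne : c.support.tail ≠ [] := by
    have h3 := hcyc.three_le_length
    intro h
    have h1 : c.support.length = 1 := by rw [c.support_eq_cons, h]; rfl
    rw [SimpleGraph.Walk.length_support] at h1
    omega
  have hvtail : v ∈ c.support.tail := by
    have hm := List.getLast_mem htne
    have hl : c.support.tail.getLast htne = v := by
      rw [List.getLast_tail]; exact c.getLast_support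
    rwa [hl] at hm
  have hScard : S.card = c.length := by
    rw [hS]
    conv_lhs => rw [c.support_eq_cons]
    rw [List.toFinset_cons, Finset.insert_eq_self.mpr (List.mem_toFinset.mpr hvtail),
      List.toFinset_card_of_nodup hcyc.support_nodup]
    have := SimpleGraph.Walk.length_support c
    rw [c.support_eq_cons] at this
    simpa using this.symm ▸ (by rw [List.length_cons] at this; omega : c.support.tail.length = c.length)
  have hEcard : E.card = c.length := by
    rw [hE, List.toFinset_card_of_nodup hedn, SimpleGraph.Walk.length_edges]
  -- q relation
  have hfiltereq : S.filter (fun u => u+5 ∉ S) =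
      L10.toFinset.filter (fun u => u ∈ c.support ∧ u+5 ∉ c.support) := by
    ext z
    simp only [Finset.mem_filter, hS, List.mem_toFinset]
    constructor
    · rintro ⟨h1, h2⟩; exact ⟨huniv z, h1, h2⟩
    · rintro ⟨-, h1, h2⟩; exact ⟨h1, h2⟩
  have hq2 : (S.filter (fun u => u+5 ∉ S)).card % 4 = 0 := by rw [hfiltereq]; exact hq1
  have hSsplit : P.card + (S.filter (fun u => u+5 ∉ S)).card = S.card := by
    rw [hP]
    exact Finset.card_filter_add_card_filter_not _
  -- sum over edges
  have hsumE : (c.edges.map r10sign).sum = ∑ e ∈ E, r10sign e :=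
    (List.sum_toFinset _ hedn).symm
  have hsplit := (Finset.sum_filter_add_sum_filter_not E (fun e => r10sign e = -1) r10sign).symm
  have hKsum : ∑ e ∈ K, r10sign e = -(K.card : ℤ) := by
    rw [Finset.sum_congr rfl (fun e he => (Finset.mem_filter.mp he).2), Finset.sum_const,
      nsmul_eq_mul, mul_neg_one]
  have hUsum : ∑ e ∈ E.filter (fun e => ¬ r10sign e = -1), r10sign e
      = ((E.filter (fun e => ¬ r10sign e = -1)).card : ℤ) := by
    rw [Finset.sum_congr rfl (fun e he => ?_), Finset.sum_const, nsmul_eq_mul, mul_one]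
    have := (Finset.mem_filter.mp he).2
    rcases sign_cases e with h | h
    · exact h
    · exact absurd h this
  have hcards : K.card + (E.filter (fun e => ¬ r10sign e = -1)).card = E.card := by
    rw [hK]
    exact Finset.card_filter_add_card_filter_not _
  rw [hsumE, hsplit, hKsum, hUsum]
  omega

end R10Aux

/-- `R₁₀` is balanceable; in fact the signing `r10sign` gives every hole
weight `≡ 0 (mod 4)`. -/
theorem stmt10 :
    ((∀ e ∈ R10.edgeSet, r10sign e = 1 ∨ r10sign e = -1) ∧
      ∀ (v : ZMod 10) (c : R10.Walk v v), IsHole R10 c →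
        ((c.edges.map r10sign).sum) % 4 = 0) ∧
    Balanceable R10 := by
  have h1 : ∀ e ∈ R10.edgeSet, r10sign e = 1 ∨ r10sign e = -1 := fun e _ => sign_cases e
  exact ⟨⟨h1, hole_weight⟩, ⟨r10sign, h1, hole_weight⟩⟩
end

section
/- In R₁₀, every edge is the unique chord of some cycle. -/
open SimpleGraph

universe u

variable {V : Type u}

instance : DecidableRel R10.Adj := fun a b =>
  decidable_of_iff _ (SimpleGraph.fromRel_adj (fun i j => j = i + 1 ∨ j = i + 5) a b).symm

/-- Base cycle witnessing the chord `s(0,5)`: `0,1,6,5,4,9,0`. -/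
def w05 : R10.Walk 0 0 :=
  .cons (show R10.Adj 0 1 by decide) <|
  .cons (show R10.Adj 1 6 by decide) <|
  .cons (show R10.Adj 6 5 by decide) <|
  .cons (show R10.Adj 5 4 by decide) <|
  .cons (show R10.Adj 4 9 by decide) <|
  .cons (show R10.Adj 9 0 by decide) .nil

/-- Base cycle witnessing the chord `s(0,1)`: `1,6,5,0,9,8,3,2,1`. -/
def w01 : R10.Walk 1 1 :=
  .cons (show R10.Adj 1 6 by decide) <|
  .cons (show R10.Adj 6 5 by decide) <|
  .cons (show R10.Adj 5 0 by decide) <|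
  .cons (show R10.Adj 0 9 by decide) <|
  .cons (show R10.Adj 9 8 by decide) <|
  .cons (show R10.Adj 8 3 by decide) <|
  .cons (show R10.Adj 3 2 by decide) <|
  .cons (show R10.Adj 2 1 by decide) .nil

lemma uniqueChord_of {x : ZMod 10} (c : R10.Walk x x) (e : Sym2 (ZMod 10))
    (hcyc : c.IsCycle) (he : e ∈ R10.edgeSet) (hne : e ∉ c.edges)
    (hsup : ∀ v ∈ e, v ∈ c.support)
    (huniq : ∀ u v : ZMod 10, R10.Adj u v → s(u, v) ∉ c.edges →
      u ∈ c.support → v ∈ c.support → s(u, v) = e) :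
    IsUniqueChord R10 c e := by
  refine ⟨hcyc, ⟨he, hne, hsup⟩, ?_⟩
  intro f
  induction f using Sym2.ind with
  | _ u v =>
    rintro ⟨hf1, hf2, hf3⟩
    exact huniq u v (R10.mem_edgeSet.mp hf1) hf2
      (hf3 u (Sym2.mem_mk_left u v)) (hf3 v (Sym2.mem_mk_right u v))

lemma h05 : IsUniqueChord R10 w05 s(0, 5) := by
  refine uniqueChord_of _ _ ⟨⟨⟨by decide⟩, by simp [w05]⟩, by decide⟩
    (R10.mem_edgeSet.mpr (by decide)) (by decide) ?_ (by decide)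
  intro v hv
  rcases Sym2.mem_iff.mp hv with rfl | rfl <;> decide

lemma h01 : IsUniqueChord R10 w01 s(0, 1) := by
  refine uniqueChord_of _ _ ⟨⟨⟨by decide⟩, by simp [w01]⟩, by decide⟩
    (R10.mem_edgeSet.mpr (by decide)) (by decide) ?_ (by decide)
  intro v hv
  rcases Sym2.mem_iff.mp hv with rfl | rfl <;> decide

lemma R10.adj_add (a : ZMod 10) {u v : ZMod 10} (h : R10.Adj u v) :
    R10.Adj (u + a) (v + a) := by
  simp only [R10, SimpleGraph.fromRel_adj] at h ⊢
  obtain ⟨hne, h⟩ := h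
  refine ⟨fun hc => hne (add_right_cancel hc), ?_⟩
  rcases h with (h | h) | (h | h)
  · exact Or.inl (Or.inl (by subst h; ring))
  · exact Or.inl (Or.inr (by subst h; ring))
  · exact Or.inr (Or.inl (by subst h; ring))
  · exact Or.inr (Or.inr (by subst h; ring))

/-- Rotation by `a` as a graph homomorphism of `R10`. -/
def rotHom (a : ZMod 10) : R10 →g R10 where
  toFun := (· + a)
  map_rel' := R10.adj_add a

lemma rotHom_inj (a : ZMod 10) : Function.Injective (rotHom a) :=
  fun _ _ h => add_right_cancel h

lemma rot_unique (a : ZMod 10) {x : ZMod 10} (c : R10.Walk x x) (e : Sym2 (ZMod 10))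
    (h : IsUniqueChord R10 c e) :
    IsUniqueChord R10 (c.map (rotHom a)) (Sym2.map (· + a) e) := by
  obtain ⟨hcyc, ⟨he1, he2, he3⟩, huniq⟩ := h
  have hinj := rotHom_inj a
  have hcoe : ⇑(rotHom a) = (· + a) := rfl
  refine ⟨hcyc.map hinj, ⟨?_, ?_, ?_⟩, ?_⟩
  · have := (rotHom a).map_mem_edgeSet he1
    rwa [Sym2.map, hcoe] at this
  · rw [SimpleGraph.Walk.edges_map, hcoe]
    intro hf
    rw [List.mem_map] at hf
    obtain ⟨f', hf', heq⟩ := hf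
    exact he2 ((Sym2.map.injective (fun _ _ h => add_right_cancel h) heq) ▸ hf')
  · intro v hv
    rw [Sym2.mem_map] at hv
    obtain ⟨u, hu, rfl⟩ := hv
    rw [SimpleGraph.Walk.support_map, List.mem_map]
    exact ⟨u, he3 u hu, rfl⟩
  · intro f hf
    obtain ⟨hf1, hf2, hf3⟩ := hf
    have key : Sym2.map (· + a) (Sym2.map (· + (-a)) f) = f := by
      have hcomp : ((· + a) ∘ (· + (-a))) = (id : ZMod 10 → ZMod 10) := by
        funext x; simp
      rw [Sym2.map_map, hcomp, Sym2.map_id, id_eq]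
    have hch : IsChord R10 c (Sym2.map (· + (-a)) f) := by
      refine ⟨?_, ?_, ?_⟩
      · have := (rotHom (-a)).map_mem_edgeSet hf1
        rwa [Sym2.map, show ⇑(rotHom (-a)) = (· + (-a)) from rfl] at this
      · intro hmem
        apply hf2
        rw [SimpleGraph.Walk.edges_map, List.mem_map, hcoe]
        exact ⟨_, hmem, key⟩
      · intro v hv
        rw [Sym2.mem_map] at hv
        obtain ⟨u, hu, rfl⟩ := hv
        have hu' := hf3 u hu
        rw [SimpleGraph.Walk.support_map, List.mem_map, hcoe] at hu'
        obtain ⟨w, hw, hwu⟩ := hu'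
        have : u + (-a) = w := by rw [← hwu]; simp
        rwa [this]
    rw [← key, huniq _ hch]

/-- in `R₁₀`, every edge is the unique chord of some cycle. -/
theorem stmt12 :
    ∀ e ∈ R10.edgeSet, ∃ (x : ZMod 10) (c : R10.Walk x x),
      IsUniqueChord R10 c e := by
  intro e
  induction e using Sym2.ind with
  | _ u v =>
    intro he
    rw [SimpleGraph.mem_edgeSet] at he
    have h := he
    simp only [R10, SimpleGraph.fromRel_adj] at h
    obtain ⟨hne, (h | h) | (h | h)⟩ := h
    · refine ⟨1 + u, w01.map (rotHom u), ?_⟩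
      have heq : Sym2.map (· + u) s((0 : ZMod 10), 1) = s(u, v) := by
        rw [Sym2.map_pair_eq, zero_add, Sym2.eq_iff]
        exact Or.inl ⟨rfl, by rw [h, add_comm]⟩
      exact heq ▸ rot_unique u w01 _ h01
    · refine ⟨0 + u, w05.map (rotHom u), ?_⟩
      have heq : Sym2.map (· + u) s((0 : ZMod 10), 5) = s(u, v) := by
        rw [Sym2.map_pair_eq, zero_add, Sym2.eq_iff]
        exact Or.inl ⟨rfl, by rw [h, add_comm]⟩
      exact heq ▸ rot_unique u w05 _ h05
    · refine ⟨1 + v, w01.map (rotHom v), ?_⟩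
      have heq : Sym2.map (· + v) s((0 : ZMod 10), 1) = s(u, v) := by
        rw [Sym2.map_pair_eq, zero_add, Sym2.eq_iff]
        exact Or.inr ⟨rfl, by rw [h, add_comm]⟩
      exact heq ▸ rot_unique v w01 _ h01
    · refine ⟨0 + v, w05.map (rotHom v), ?_⟩
      have heq : Sym2.map (· + v) s((0 : ZMod 10), 5) = s(u, v) := by
        rw [Sym2.map_pair_eq, zero_add, Sym2.eq_iff]
        exact Or.inr ⟨rfl, by rw [h, add_comm]⟩
      exact heq ▸ rot_unique v w05 _ h05
end
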